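/- arXiv:1912.00892 — 5 statements merged into one kernel-verified Lean document; each statement's English description precedes it below -/
import Mathlib

section
/- If F : [a,b] → ℝ is a continuous function that is of bounded variation on [a,b] and satisfies Lusin's condition (N) (the image of every Lebesgue null set is null), then F is absolutely continuous on [a,b]. -/
open Set MeasureTheory

/-- Lusin's condition (N) on `[a,b]`: the image of every Lebesgue-null subset of `[a,b]`
is Lebesgue-null. -/
def LusinN (F : ℝ → ℝ) (a b : ℝ) : Prop :=
  ∀ E : Set ℝ, E ⊆ Set.Icc a b → volume E = 0 → volume (F '' E) = 0

/-- Absolute continuity of `F` on `[a,b]` (standard ε-δ definition with finitely many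
pairwise non-overlapping subintervals). -/
def AbsolutelyContinuousOnIcc (F : ℝ → ℝ) (a b : ℝ) : Prop :=
  ∀ ε > (0 : ℝ), ∃ δ > (0 : ℝ), ∀ (n : ℕ) (u v : Fin n → ℝ),
    (∀ i, u i ≤ v i) → (∀ i, Set.Icc (u i) (v i) ⊆ Set.Icc a b) →
    (∀ i j, i ≠ j → Disjoint (Set.Ioo (u i) (v i)) (Set.Ioo (u j) (v j))) →
    (∑ i, (v i - u i)) < δ → (∑ i, |F (v i) - F (u i)|) < ε

theorem continuous_bv_lusinN_implies_AC (F : ℝ → ℝ) (a b : ℝ) (hab : a ≤ b)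
    (hcont : ContinuousOn F (Set.Icc a b))
    (hbv : BoundedVariationOn F (Set.Icc a b))
    (hN : LusinN F a b) :
    AbsolutelyContinuousOnIcc F a b := by
  classical
  -- Jordan decomposition on `[a,b]`
  obtain ⟨p, q, hp, hq, hpq⟩ :=
    hbv.locallyBoundedVariationOn.exists_monotoneOn_sub_monotoneOn
  -- project `ℝ` onto `[a,b]` to extend `p, q` to monotone functions on all of `ℝ`
  set proj : ℝ → ℝ := fun x => max a (min x b) with hproj
  have hprojmem : ∀ x, proj x ∈ Set.Icc a b := fun x =>
    ⟨le_max_left _ _, max_le hab (min_le_right _ _)⟩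
  have hprojmono : Monotone proj := fun x y hxy =>
    max_le_max le_rfl (min_le_min hxy le_rfl)
  have hprojeq : ∀ x ∈ Set.Icc a b, proj x = x := by
    rintro x ⟨hx1, hx2⟩
    simp [hproj, min_eq_left hx2, max_eq_right hx1]
  set P : ℝ → ℝ := fun x => p (proj x) with hP
  set Q : ℝ → ℝ := fun x => q (proj x) with hQ
  have hPmono : Monotone P := fun x y hxy =>
    hp (hprojmem x) (hprojmem y) (hprojmono hxy)
  have hQmono : Monotone Q := fun x y hxy =>
    hq (hprojmem x) (hprojmem y) (hprojmono hxy)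
  have hFeq : ∀ x ∈ Set.Icc a b, F x = P x - Q x := by
    intro x hx
    simp only [hP, hQ, hprojeq x hx]
    have := congrFun hpq x
    simpa using this
  -- a.e. derivatives of the monotone extensions
  set rP : ℝ → ENNReal := Measure.rnDeriv hPmono.stieltjesFunction.measure volume with hrP
  set rQ : ℝ → ENNReal := Measure.rnDeriv hQmono.stieltjesFunction.measure volume with hrQ
  set g : ℝ → ENNReal := fun x => rP x + rQ x with hg
  have hgmeas : Measurable g :=
    (Measure.measurable_rnDeriv _ _).add (Measure.measurable_rnDeriv _ _)
  set d : ℝ → ℝ := fun x => (rP x).toReal - (rQ x).toReal with hd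
  have hae : ∀ᵐ x ∂(volume : Measure ℝ),
      HasDerivAt P ((rP x).toReal) x ∧ HasDerivAt Q ((rQ x).toReal) x :=
    hPmono.ae_hasDerivAt.and hQmono.ae_hasDerivAt
  obtain ⟨T, hTsub, hTmeas, hT0⟩ :=
    exists_measurable_superset_of_null (ae_iff.1 hae)
  -- finiteness of the total derivative integral
  have hfinP : ∫⁻ x in Set.Icc a b, rP x ∂volume ≠ ⊤ := by
    refine ne_of_lt (lt_of_le_of_lt (Measure.setLIntegral_rnDeriv_le _) ?_)
    exact isCompact_Icc.measure_lt_top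
  have hfinQ : ∫⁻ x in Set.Icc a b, rQ x ∂volume ≠ ⊤ := by
    refine ne_of_lt (lt_of_le_of_lt (Measure.setLIntegral_rnDeriv_le _) ?_)
    exact isCompact_Icc.measure_lt_top
  have hfin : ∫⁻ x, (Set.Icc a b).indicator g x ∂volume ≠ ⊤ := by
    rw [lintegral_indicator measurableSet_Icc, hg]
    rw [lintegral_add_left (Measure.measurable_rnDeriv _ _)]
    exact ENNReal.add_ne_top.2 ⟨hfinP, hfinQ⟩
  -- the key per-interval estimate
  have key : ∀ u v : ℝ, a ≤ u → u ≤ v → v ≤ b →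
      ENNReal.ofReal |F v - F u| ≤ ∫⁻ x in Set.Icc u v, g x ∂volume := by
    intro u v hau huv hvb
    have hIcc : Set.Icc u v ⊆ Set.Icc a b := Set.Icc_subset_Icc hau hvb
    -- step 1: |F v - F u| ≤ volume (F '' [u,v])
    have h1 : ENNReal.ofReal |F v - F u| ≤ volume (F '' Set.Icc u v) := by
      rcases le_total (F u) (F v) with h | h
      · have hsub : Set.Icc (F u) (F v) ⊆ F '' Set.Icc u v :=
          intermediate_value_Icc huv (hcont.mono hIcc)
        calc ENNReal.ofReal |F v - F u| = volume (Set.Icc (F u) (F v)) := by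
              rw [Real.volume_Icc, abs_of_nonneg (sub_nonneg.2 h)]
          _ ≤ volume (F '' Set.Icc u v) := measure_mono hsub
      · have hsub : Set.Icc (F v) (F u) ⊆ F '' Set.Icc u v :=
          intermediate_value_Icc' huv (hcont.mono hIcc)
        calc ENNReal.ofReal |F v - F u| = volume (Set.Icc (F v) (F u)) := by
              rw [Real.volume_Icc, abs_of_nonpos (sub_nonpos.2 h), neg_sub]
          _ ≤ volume (F '' Set.Icc u v) := measure_mono hsub
    -- step 2: split into good and bad parts
    have hsplit : volume (F '' Set.Icc u v) ≤
        volume (F '' (Set.Icc u v \ T)) + volume (F '' (Set.Icc u v ∩ T)) := by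
      refine le_trans (measure_mono ?_) (measure_union_le _ _)
      rw [← Set.image_union, Set.diff_union_inter]
    -- bad part is null by Lusin's condition (N)
    have hbad : volume (F '' (Set.Icc u v ∩ T)) = 0 := by
      refine hN _ (Set.inter_subset_left.trans hIcc) ?_
      exact measure_mono_null Set.inter_subset_right hT0
    -- good part via the Jacobian estimate
    have hgood : volume (F '' (Set.Icc u v \ T)) ≤
        ∫⁻ x in Set.Icc u v \ T, ENNReal.ofReal |d x| ∂volume := by
      have hmeas : MeasurableSet (Set.Icc u v \ T) := measurableSet_Icc.diff hTmeas
      have hder : ∀ x ∈ Set.Icc u v \ T,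
          HasFDerivWithinAt F ((1 : ℝ →L[ℝ] ℝ).smulRight (d x)) (Set.Icc u v \ T) x := by
        rintro x ⟨hx1, hx2⟩
        have hx3 : HasDerivAt P ((rP x).toReal) x ∧ HasDerivAt Q ((rQ x).toReal) x := by
          by_contra hcon
          exact hx2 (hTsub hcon)
        have hPQ : HasDerivAt (fun y => P y - Q y) (d x) x := hx3.1.sub hx3.2
        have hw : HasDerivWithinAt (fun y => P y - Q y) (d x) (Set.Icc u v \ T) x :=
          hPQ.hasDerivWithinAt
        have hw2 : HasDerivWithinAt F (d x) (Set.Icc u v \ T) x := by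
          refine hw.congr (fun y hy => hFeq y (hIcc hy.1)) (hFeq x (hIcc hx1))
        exact hw2.hasFDerivWithinAt
      have := MeasureTheory.addHaar_image_le_lintegral_abs_det_fderiv volume hmeas hder
      simpa only [ContinuousLinearMap.det_smulRight, ContinuousLinearMap.one_apply, one_mul] using this
    -- pointwise bound |d| ≤ g
    have hdg : ∀ x, ENNReal.ofReal |d x| ≤ g x := by
      intro x
      have h1 : |d x| ≤ (rP x).toReal + (rQ x).toReal := by
        have := abs_sub (rP x).toReal (rQ x).toReal
        simpa [abs_of_nonneg ENNReal.toReal_nonneg] using this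
      calc ENNReal.ofReal |d x| ≤ ENNReal.ofReal ((rP x).toReal + (rQ x).toReal) :=
            ENNReal.ofReal_le_ofReal h1
        _ = ENNReal.ofReal (rP x).toReal + ENNReal.ofReal (rQ x).toReal :=
            ENNReal.ofReal_add ENNReal.toReal_nonneg ENNReal.toReal_nonneg
        _ ≤ rP x + rQ x := add_le_add ENNReal.ofReal_toReal_le ENNReal.ofReal_toReal_le
    calc ENNReal.ofReal |F v - F u| ≤ volume (F '' Set.Icc u v) := h1
      _ ≤ volume (F '' (Set.Icc u v \ T)) + volume (F '' (Set.Icc u v ∩ T)) := hsplit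
      _ = volume (F '' (Set.Icc u v \ T)) := by rw [hbad, add_zero]
      _ ≤ ∫⁻ x in Set.Icc u v \ T, ENNReal.ofReal |d x| ∂volume := hgood
      _ ≤ ∫⁻ x in Set.Icc u v \ T, g x ∂volume := lintegral_mono fun x => hdg x
      _ ≤ ∫⁻ x in Set.Icc u v, g x ∂volume :=
          lintegral_mono' (Measure.restrict_mono Set.diff_subset le_rfl) le_rfl
  -- now the ε-δ argument
  intro ε hε
  obtain ⟨δ0, hδ0pos, hδ0⟩ :=
    exists_pos_setLIntegral_lt_of_measure_lt (μ := (volume : Measure ℝ)) hfin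
      (ε := ENNReal.ofReal ε) (ENNReal.ofReal_pos.2 hε).ne'
  obtain ⟨δr, hδrpos, hδr⟩ : ∃ δr : ℝ, 0 < δr ∧ ENNReal.ofReal δr ≤ δ0 := by
    rcases eq_or_ne δ0 ⊤ with h | h
    · exact ⟨1, one_pos, by simp [h]⟩
    · refine ⟨δ0.toReal, ENNReal.toReal_pos hδ0pos.ne' h, ?_⟩
      rw [ENNReal.ofReal_toReal h]
  refine ⟨δr, hδrpos, ?_⟩
  intro n u v hle hsub hdisj hsum
  set U : Set ℝ := ⋃ i, Set.Ioo (u i) (v i) with hU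
  have hUmeas : ∀ i, MeasurableSet (Set.Ioo (u i) (v i)) := fun i => measurableSet_Ioo
  have hUvol : volume U < δ0 := by
    have h1 : volume U ≤ ∑ i, volume (Set.Ioo (u i) (v i)) := by
      refine le_trans (measure_iUnion_le _) ?_
      rw [tsum_fintype]
    have h2 : (∑ i, volume (Set.Ioo (u i) (v i))) = ENNReal.ofReal (∑ i, (v i - u i)) := by
      rw [ENNReal.ofReal_sum_of_nonneg fun i _ => sub_nonneg.2 (hle i)]
      exact Finset.sum_congr rfl fun i _ => Real.volume_Ioo
    calc volume U ≤ ENNReal.ofReal (∑ i, (v i - u i)) := h1.trans_eq h2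
      _ < ENNReal.ofReal δr := (ENNReal.ofReal_lt_ofReal_iff hδrpos).2 hsum
      _ ≤ δ0 := hδr
  have hmain : ENNReal.ofReal (∑ i, |F (v i) - F (u i)|) < ENNReal.ofReal ε := by
    have hstep1 : ENNReal.ofReal (∑ i, |F (v i) - F (u i)|)
        = ∑ i, ENNReal.ofReal |F (v i) - F (u i)| :=
      ENNReal.ofReal_sum_of_nonneg fun i _ => abs_nonneg _
    have hbounds : ∀ i, a ≤ u i ∧ v i ≤ b := by
      intro i
      have h1 := hsub i ⟨le_refl (u i), hle i⟩
      have h2 := hsub i ⟨hle i, le_refl (v i)⟩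
      exact ⟨h1.1, h2.2⟩
    have hstep2 : ∀ i, ENNReal.ofReal |F (v i) - F (u i)|
        ≤ ∫⁻ x in Set.Ioo (u i) (v i), (Set.Icc a b).indicator g x ∂volume := by
      intro i
      have h1 := key (u i) (v i) (hbounds i).1 (hle i) (hbounds i).2
      have h2 : ∫⁻ x in Set.Icc (u i) (v i), g x ∂volume
          = ∫⁻ x in Set.Ioo (u i) (v i), g x ∂volume :=
        (setLIntegral_congr (Ioo_ae_eq_Icc (μ := volume) (a := u i) (b := v i))).symm
      have h3 : ∫⁻ x in Set.Ioo (u i) (v i), g x ∂volume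
          = ∫⁻ x in Set.Ioo (u i) (v i), (Set.Icc a b).indicator g x ∂volume := by
        refine setLIntegral_congr_fun measurableSet_Ioo ?_
        intro x hx
        rw [Set.indicator_of_mem (hsub i (Set.Ioo_subset_Icc_self hx)) g]
      exact h1.trans (le_of_eq (h2.trans h3))
    have hstep3 : (∑ i, ∫⁻ x in Set.Ioo (u i) (v i), (Set.Icc a b).indicator g x ∂volume)
        = ∫⁻ x in U, (Set.Icc a b).indicator g x ∂volume := by
      rw [hU, lintegral_iUnion hUmeas (fun i j hij => hdisj i j hij), tsum_fintype]
    calc ENNReal.ofReal (∑ i, |F (v i) - F (u i)|)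
        = ∑ i, ENNReal.ofReal |F (v i) - F (u i)| := hstep1
      _ ≤ ∑ i, ∫⁻ x in Set.Ioo (u i) (v i), (Set.Icc a b).indicator g x ∂volume :=
          Finset.sum_le_sum fun i _ => hstep2 i
      _ = ∫⁻ x in U, (Set.Icc a b).indicator g x ∂volume := hstep3
      _ < ENNReal.ofReal ε := hδ0 U hUvol
  have hnn : 0 ≤ ∑ i, |F (v i) - F (u i)| :=
    Finset.sum_nonneg fun i _ => abs_nonneg _
  exact (ENNReal.ofReal_lt_ofReal_iff_of_nonneg hnn).1 hmain
end

section
/- If f : [0,1] → ℝ is Henstock–Kurzweil integrable and the interval variation of its indefinite integral F(I) = ∫_I f is finite (i.e., sup over finite interval partitions {I₁,…,Iₙ} of [0,1] of ∑ᵢ |F(Iᵢ)| < ∞), then f is Lebesgue integrable on [0,1]. -/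
open Set MeasureTheory

/-- `x : Fin (n+1) → ℝ` is a partition of `[a,b]` into `n` consecutive closed intervals. -/
def IsIntervalPartition (n : ℕ) (a b : ℝ) (x : Fin (n + 1) → ℝ) : Prop :=
  Monotone x ∧ x 0 = a ∧ x (Fin.last n) = b

/-- The tags form a Perron tagging: each tag belongs to its interval. -/
def IsPerronTagged (n : ℕ) (x : Fin (n + 1) → ℝ) (t : Fin n → ℝ) : Prop :=
  ∀ i : Fin n, t i ∈ Set.Icc (x i.castSucc) (x i.succ)

/-- The tagged partition is `δ`-fine: `Iᵢ ⊆ [tᵢ - δ(tᵢ), tᵢ + δ(tᵢ)]`. -/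
def IsDeltaFine (δ : ℝ → ℝ) (n : ℕ) (x : Fin (n + 1) → ℝ) (t : Fin n → ℝ) : Prop :=
  ∀ i : Fin n, Set.Icc (x i.castSucc) (x i.succ) ⊆ Set.Icc (t i - δ (t i)) (t i + δ (t i))

/-- Henstock–Kurzweil integrability of `f` on `[a,b]` with integral `I`. -/
def HasHKIntegral (f : ℝ → ℝ) (a b : ℝ) (I : ℝ) : Prop :=
  ∀ ε > (0 : ℝ), ∃ δ : ℝ → ℝ, (∀ s, 0 < δ s) ∧
    ∀ (n : ℕ) (x : Fin (n + 1) → ℝ) (t : Fin n → ℝ),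
      IsIntervalPartition n a b x → IsPerronTagged n x t → IsDeltaFine δ n x t →
      |(∑ i : Fin n, (x i.succ - x i.castSucc) * f (t i)) - I| < ε

namespace HKAux

/-- Riemann sum over a ℕ-indexed partition. -/
def rsum (f : ℝ → ℝ) (x t : ℕ → ℝ) (n : ℕ) : ℝ :=
  ∑ i ∈ Finset.range n, (x (i + 1) - x i) * f (t i)

/-- A δ-fine tagged partition of `[a,b]` with `n` intervals, ℕ-indexed. -/
structure NatPart (δ : ℝ → ℝ) (n : ℕ) (a b : ℝ) (x t : ℕ → ℝ) : Prop where
  mono : ∀ i < n, x i ≤ x (i + 1)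
  first : x 0 = a
  last : x n = b
  tagl : ∀ i < n, x i ≤ t i
  tagr : ∀ i < n, t i ≤ x (i + 1)
  finel : ∀ i < n, t i - δ (t i) ≤ x i
  finer : ∀ i < n, x (i + 1) ≤ t i + δ (t i)

theorem NatPart.chain {δ n a b x t} (h : NatPart δ n a b x t) :
    ∀ j ≤ n, ∀ i ≤ j, x i ≤ x j := by
  intro j
  induction j with
  | zero => intro _ i hi; simp [Nat.le_zero.mp hi]
  | succ j ih =>
    intro hj i hi
    rcases Nat.lt_or_ge i (j+1) with h1 | h1
    · exact le_trans (ih (by omega) i (by omega)) (h.mono j (by omega))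
    · have : i = j + 1 := by omega
      simp [this]

theorem NatPart.le {δ n a b x t} (h : NatPart δ n a b x t) : a ≤ b := by
  rw [← h.first, ← h.last]; exact h.chain n le_rfl 0 (Nat.zero_le n)

theorem NatPart.mono_gauge {δ δ' n a b x t} (h : NatPart δ n a b x t)
    (hδ : ∀ s, δ s ≤ δ' s) : NatPart δ' n a b x t where
  mono := h.mono
  first := h.first
  last := h.last
  tagl := h.tagl
  tagr := h.tagr
  finel := fun i hi => le_trans (by linarith [hδ (t i)]) (h.finel i hi)
  finer := fun i hi => le_trans (h.finer i hi) (by linarith [hδ (t i)])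

/-- Bridge: from Fin-style HK integrability to ℕ-style. -/
theorem hk_nat {f : ℝ → ℝ} {a b I : ℝ} (h : HasHKIntegral f a b I) :
    ∀ ε > (0:ℝ), ∃ δ : ℝ → ℝ, (∀ s, 0 < δ s) ∧
      ∀ (n : ℕ) (x t : ℕ → ℝ), NatPart δ n a b x t → |rsum f x t n - I| < ε := by
  intro ε hε
  obtain ⟨δ, hδpos, hδ⟩ := h ε hε
  refine ⟨δ, hδpos, fun n x t hp => ?_⟩
  have key := hδ n (fun i => x i.val) (fun i => t i.val)
    ⟨?_, by simp [hp.first], by simp [hp.last]⟩ ?_ ?_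
  · have : (∑ i : Fin n, ((fun i : Fin (n+1) => x i.val) i.succ -
        (fun i : Fin (n+1) => x i.val) i.castSucc) * f (t i.val)) = rsum f x t n := by
      rw [show (∑ i : Fin n, ((fun i : Fin (n+1) => x i.val) i.succ -
        (fun i : Fin (n+1) => x i.val) i.castSucc) * f (t i.val))
        = ∑ i : Fin n, (fun k => (x (k+1) - x k) * f (t k)) i.val from
        Finset.sum_congr rfl (fun i _ => by simp)]
      rw [Fin.sum_univ_eq_sum_range (fun k => (x (k+1) - x k) * f (t k)) n]
      rfl
    rwa [this] at key
  · intro i j hij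
    exact hp.chain j.val (Nat.lt_succ_iff.mp j.isLt) i.val hij
  · intro i
    exact ⟨by simpa using hp.tagl i.val i.isLt, by simpa using hp.tagr i.val i.isLt⟩
  · intro i y hy
    simp only [Set.mem_Icc] at hy ⊢
    constructor
    · exact le_trans (hp.finel i.val i.isLt) (by simpa using hy.1)
    · refine le_trans ?_ (hp.finer i.val i.isLt)
      simpa using hy.2

/-- Concatenation of partitions: the points. -/
def cat (n : ℕ) (x y : ℕ → ℝ) : ℕ → ℝ := fun i => if i ≤ n then x i else y (i - n)

/-- Concatenation of partitions: the tags. -/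
def catt (n : ℕ) (t s : ℕ → ℝ) : ℕ → ℝ := fun i => if i < n then t i else s (i - n)

theorem cat_left {n : ℕ} {x y : ℕ → ℝ} {i : ℕ} (h : i ≤ n) : cat n x y i = x i := if_pos h

theorem cat_right {n : ℕ} {x y : ℕ → ℝ} (hxy : x n = y 0) (j : ℕ) :
    cat n x y (n + j) = y j := by
  cases j with
  | zero => simp [cat, hxy]
  | succ j => simp [cat, Nat.add_sub_cancel_left]

theorem NatPart.concat {δ n m a b c x t y s} (h1 : NatPart δ n a b x t)
    (h2 : NatPart δ m b c y s) : NatPart δ (n + m) a c (cat n x y) (catt n t s) := by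
  have hxy : x n = y 0 := by rw [h1.last, h2.first]
  have hcat : ∀ j, cat n x y (n + j) = y j := cat_right hxy
  constructor
  · intro i hi
    rcases Nat.lt_or_ge i n with h | h
    · rw [cat_left (by omega), cat_left (by omega)]; exact h1.mono i h
    · obtain ⟨j, rfl⟩ := Nat.exists_eq_add_of_le h
      rw [hcat, show n + j + 1 = n + (j+1) from rfl, hcat]
      exact h2.mono j (by omega)
  · rw [cat_left (Nat.zero_le n), h1.first]
  · rw [show n + m = n + m from rfl, hcat, h2.last]
  · intro i hi
    rcases Nat.lt_or_ge i n with h | h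
    · rw [cat_left (by omega)]; simpa [catt, h] using h1.tagl i h
    · obtain ⟨j, rfl⟩ := Nat.exists_eq_add_of_le h
      rw [hcat]; simpa [catt, Nat.add_sub_cancel_left, Nat.not_lt.mpr h] using h2.tagl j (by omega)
  · intro i hi
    rcases Nat.lt_or_ge i n with h | h
    · rw [show i + 1 = i + 1 from rfl, cat_left (by omega)]
      simpa [catt, h] using h1.tagr i h
    · obtain ⟨j, rfl⟩ := Nat.exists_eq_add_of_le h
      rw [show n + j + 1 = n + (j+1) from rfl, hcat]
      simpa [catt, Nat.add_sub_cancel_left, Nat.not_lt.mpr h] using h2.tagr j (by omega)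
  · intro i hi
    rcases Nat.lt_or_ge i n with h | h
    · rw [cat_left (by omega)]; simpa [catt, h] using h1.finel i h
    · obtain ⟨j, rfl⟩ := Nat.exists_eq_add_of_le h
      rw [hcat]; simpa [catt, Nat.add_sub_cancel_left, Nat.not_lt.mpr h] using h2.finel j (by omega)
  · intro i hi
    rcases Nat.lt_or_ge i n with h | h
    · rw [show i + 1 = i + 1 from rfl, cat_left (by omega)]
      simpa [catt, h] using h1.finer i h
    · obtain ⟨j, rfl⟩ := Nat.exists_eq_add_of_le h
      rw [show n + j + 1 = n + (j+1) from rfl, hcat]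
      simpa [catt, Nat.add_sub_cancel_left, Nat.not_lt.mpr h] using h2.finer j (by omega)

theorem rsum_concat {f : ℝ → ℝ} {n m : ℕ} {x t y s : ℕ → ℝ} (hxy : x n = y 0) :
    rsum f (cat n x y) (catt n t s) (n + m) = rsum f x t n + rsum f y s m := by
  have hcat : ∀ j, cat n x y (n + j) = y j := cat_right hxy
  rw [rsum, Finset.sum_range_add]
  congr 1
  · exact Finset.sum_congr rfl fun i hi => by
      have hi' := Finset.mem_range.mp hi
      rw [cat_left (by omega), cat_left (by omega)]
      simp [catt, hi']
  · exact Finset.sum_congr rfl fun j hj => by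
      rw [show n + j + 1 = n + (j + 1) from rfl, hcat, hcat]
      simp [catt, Nat.add_sub_cancel_left]

/-- The one-interval partition. -/
theorem natPart_single {δ : ℝ → ℝ} {p q τ : ℝ} (hpt : p ≤ τ) (htq : τ ≤ q)
    (hl : τ - δ τ ≤ p) (hr : q ≤ τ + δ τ) :
    NatPart δ 1 p q (fun i => if i = 0 then p else q) (fun _ => τ) := by
  constructor
  · intro i hi; interval_cases i; simp; linarith
  · simp
  · simp
  · intro i hi; interval_cases i; simpa using hpt
  · intro i hi; interval_cases i; simpa using htq
  · intro i hi; interval_cases i; simpa using hl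
  · intro i hi; interval_cases i; simpa using hr

theorem rsum_single {f : ℝ → ℝ} {p q τ : ℝ} :
    rsum f (fun i => if i = 0 then p else q) (fun _ => τ) 1 = (q - p) * f τ := by
  simp [rsum]

/-- Cousin's lemma: δ-fine tagged partitions exist. -/
theorem cousin (δ : ℝ → ℝ) (hδ : ∀ s, 0 < δ s) {a b : ℝ} (hab : a ≤ b) :
    ∃ n x t, NatPart δ n a b x t := by
  set S : Set ℝ := {y | y ∈ Set.Icc a b ∧ ∃ n x t, NatPart δ n a y x t} with hS
  have haS : a ∈ S := ⟨⟨le_rfl, hab⟩, 0, fun _ => a, fun _ => a, by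
    constructor <;> simp⟩
  have hbdd : BddAbove S := ⟨b, fun y hy => hy.1.2⟩
  have hne : S.Nonempty := ⟨a, haS⟩
  set c := sSup S with hc
  have hac : a ≤ c := le_csSup hbdd haS
  have hcb : c ≤ b := csSup_le hne (fun y hy => hy.1.2)
  -- extension lemma
  have ext : ∀ y ∈ S, ∀ z, y ≤ z → z ≤ b → c - δ c ≤ y → y ≤ c → c ≤ z → z ≤ c + δ c →
      z ∈ S := by
    intro y hy z hyz hzb h1 h2 h3 h4
    obtain ⟨⟨hay, _⟩, n, x, t, hp⟩ := hy
    refine ⟨⟨le_trans hay hyz, hzb⟩, n + 1, cat n x (fun i => if i = 0 then y else z),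
      catt n t (fun _ => c), hp.concat (natPart_single h2 h3 h1 h4)⟩
  have hcS : c ∈ S := by
    obtain ⟨y, hyS, hy1⟩ := exists_lt_of_lt_csSup hne (show c - δ c < c by linarith [hδ c])
    have hy2 : y ≤ c := le_csSup hbdd hyS
    exact ext y hyS c hy2 hcb (le_of_lt hy1) hy2 le_rfl (by linarith [hδ c])
  rcases eq_or_lt_of_le hcb with h | h
  · obtain ⟨_, n, x, t, hp⟩ := hcS; exact ⟨n, x, t, h ▸ hp⟩
  · exfalso
    set z := min b (c + δ c) with hz
    have hz1 : c < z := lt_min h (by linarith [hδ c])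
    have : z ∈ S := ext c hcS z (le_of_lt hz1) (min_le_left _ _)
      (by linarith [hδ c]) le_rfl (le_of_lt hz1) (min_le_right _ _)
    exact absurd (le_csSup hbdd this) (not_le.mpr hz1)

end HKAux

namespace HKAux

theorem eq_of_forall_abs_lt {x y : ℝ} (h : ∀ ε > (0:ℝ), |x - y| < ε) : x = y := by
  by_contra hne
  exact absurd (h _ (abs_pos.mpr (sub_ne_zero.mpr hne))) (lt_irrefl _)

theorem chain_mono {x : ℕ → ℝ} {n : ℕ} (h : ∀ i < n, x i ≤ x (i + 1)) :
    ∀ j ≤ n, ∀ i ≤ j, x i ≤ x j := by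
  intro j
  induction j with
  | zero => intro _ i hi; simp [Nat.le_zero.mp hi]
  | succ j ih =>
    intro hj i hi
    rcases Nat.lt_or_ge i (j+1) with h1 | h1
    · exact le_trans (ih (by omega) i (by omega)) (h j (by omega))
    · have : i = j + 1 := by omega
      simp [this]

variable {f : ℝ → ℝ} {F : ℝ → ℝ → ℝ}

theorem F_additive
    (hF : ∀ a b : ℝ, 0 ≤ a → a ≤ b → b ≤ 1 → HasHKIntegral f a b (F a b))
    {a b c : ℝ} (ha : 0 ≤ a) (hab : a ≤ b) (hbc : b ≤ c) (hc : c ≤ 1) :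
    F a c = F a b + F b c := by
  apply eq_of_forall_abs_lt
  intro ε hε
  have hε3 : (0:ℝ) < ε / 3 := by linarith
  obtain ⟨δ1, hδ1p, h1⟩ := hk_nat (hF a b ha hab (le_trans hbc hc)) (ε/3) hε3
  obtain ⟨δ2, hδ2p, h2⟩ := hk_nat (hF b c (le_trans ha hab) hbc hc) (ε/3) hε3
  obtain ⟨δ3, hδ3p, h3⟩ := hk_nat (hF a c ha (le_trans hab hbc) hc) (ε/3) hε3
  set δ : ℝ → ℝ := fun s => min (δ1 s) (min (δ2 s) (δ3 s)) with hδdef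
  have hδp : ∀ s, 0 < δ s := fun s => lt_min (hδ1p s) (lt_min (hδ2p s) (hδ3p s))
  obtain ⟨n, x, t, hp⟩ := cousin δ hδp hab
  obtain ⟨m, y, s, hq⟩ := cousin δ hδp hbc
  have e1 := h1 n x t (hp.mono_gauge (fun s => min_le_left _ _))
  have e2 := h2 m y s (hq.mono_gauge (fun s => le_trans (min_le_right _ _) (min_le_left _ _)))
  have hcat := hp.concat hq
  have e3 := h3 (n + m) _ _ (hcat.mono_gauge (fun s => le_trans (min_le_right _ _) (min_le_right _ _)))
  rw [rsum_concat (by rw [hp.last, hq.first])] at e3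
  rw [abs_lt] at e1 e2 e3 ⊢
  exact ⟨by linarith, by linarith⟩

theorem F_self (hF : ∀ a b : ℝ, 0 ≤ a → a ≤ b → b ≤ 1 → HasHKIntegral f a b (F a b))
    {a : ℝ} (ha : 0 ≤ a) (ha1 : a ≤ 1) : F a a = 0 := by
  have := F_additive hF ha le_rfl le_rfl ha1
  linarith

theorem F_telescope
    (hF : ∀ a b : ℝ, 0 ≤ a → a ≤ b → b ≤ 1 → HasHKIntegral f a b (F a b))
    {x : ℕ → ℝ} {n : ℕ} (hm : ∀ i < n, x i ≤ x (i + 1)) (h0 : 0 ≤ x 0) (h1 : x n ≤ 1) :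
    ∑ i ∈ Finset.range n, F (x i) (x (i + 1)) = F (x 0) (x n) := by
  induction n with
  | zero => simp [F_self hF h0 h1]
  | succ n ih =>
    have hmono : ∀ i < n, x i ≤ x (i+1) := fun i hi => hm i (by omega)
    have hxn : x n ≤ x (n+1) := hm n (by omega)
    rw [Finset.sum_range_succ, ih hmono (by linarith [chain_mono hm (n+1) le_rfl n (by omega)] ),
      ← F_additive hF h0 (chain_mono hmono n le_rfl 0 (by omega)) hxn h1]

end HKAux
namespace HKAux

variable {f : ℝ → ℝ} {F : ℝ → ℝ → ℝ}

/-- A δ-fine partition of `[p,q]` whose Riemann sum is within `η` of `F p q`. -/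
theorem fine_part_close (hF : ∀ a b : ℝ, 0 ≤ a → a ≤ b → b ≤ 1 → HasHKIntegral f a b (F a b))
    {δ : ℝ → ℝ} (hδp : ∀ s, 0 < δ s) {p q : ℝ} (hp : 0 ≤ p) (hpq : p ≤ q) (hq : q ≤ 1)
    {η : ℝ} (hη : 0 < η) :
    ∃ n x t, NatPart δ n p q x t ∧ |rsum f x t n - F p q| < η := by
  obtain ⟨δ', hδ'p, h'⟩ := hk_nat (hF p q hp hpq hq) η hη
  obtain ⟨n, x, t, hpart⟩ := cousin (fun s => min (δ s) (δ' s))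
    (fun s => lt_min (hδp s) (hδ'p s)) hpq
  exact ⟨n, x, t, hpart.mono_gauge (fun s => min_le_left _ _),
    h' n x t (hpart.mono_gauge (fun s => min_le_right _ _))⟩

section Chain

variable {δ : ℝ → ℝ} {k : ℕ} {u v τ : ℕ → ℝ}

/-- Patchwork: build a δ-fine partition of `[0, v (k-1)]` containing the given tagged
intervals, filling the gaps with fine partitions; the Riemann sum is close to the sum of
tagged terms plus exact `F`-values of gaps. -/
theorem patchwork (hF : ∀ a b : ℝ, 0 ≤ a → a ≤ b → b ≤ 1 → HasHKIntegral f a b (F a b))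
    (hδp : ∀ s, 0 < δ s)
    (h1 : ∀ i < k, u i ≤ v i) (h2 : ∀ i, i + 1 < k → v i ≤ u (i + 1))
    (h3 : ∀ i < k, 0 ≤ u i) (h4 : ∀ i < k, v i ≤ 1)
    (htagl : ∀ i < k, u i ≤ τ i) (htagr : ∀ i < k, τ i ≤ v i)
    (hfl : ∀ i < k, τ i - δ (τ i) ≤ u i) (hfr : ∀ i < k, v i ≤ τ i + δ (τ i))
    {η : ℝ} (hη : 0 < η) :
    ∃ n x t, NatPart δ n 0 (if k = 0 then 0 else v (k - 1)) x t ∧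
      |rsum f x t n - ∑ i ∈ Finset.range k,
        ((v i - u i) * f (τ i) + F (if i = 0 then 0 else v (i - 1)) (u i))| ≤ k * η := by
  induction k with
  | zero =>
    refine ⟨0, fun _ => 0, fun _ => 0, ?_, by simp [rsum]⟩
    constructor <;> simp
  | succ k ih =>
    obtain ⟨n, x, t, hp, hbound⟩ := ih (fun i hi => h1 i (by omega))
      (fun i hi => h2 i (by omega)) (fun i hi => h3 i (by omega))
      (fun i hi => h4 i (by omega)) (fun i hi => htagl i (by omega))
      (fun i hi => htagr i (by omega)) (fun i hi => hfl i (by omega))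
      (fun i hi => hfr i (by omega))
    set e : ℝ := if k = 0 then 0 else v (k - 1) with he
    have hk1 : k < k + 1 := by omega
    have h0e : 0 ≤ e := by
      rw [he]; split
      · exact le_rfl
      · rename_i hk0
        have hk' : k - 1 < k + 1 := by omega
        exact le_trans (h3 _ hk') (le_trans (htagl _ hk') (htagr _ hk'))
    have heu : e ≤ u k := by
      rw [he]; split
      · rename_i hk0; subst hk0; exact h3 0 hk1
      · rename_i hk0
        have := h2 (k-1) (by omega)
        rwa [show k - 1 + 1 = k by omega] at this
    have huv : u k ≤ v k := h1 k hk1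
    have hv1 : v k ≤ 1 := h4 k hk1
    obtain ⟨m, y, s, hq, hqc⟩ := fine_part_close hF hδp h0e heu (le_trans huv hv1) hη
    have hsingle := natPart_single (htagl k hk1) (htagr k hk1) (hfl k hk1) (hfr k hk1)
    have hcat1 := hp.concat hq
    have hcat2 := hcat1.concat hsingle
    refine ⟨n + m + 1, _, _, by simpa using hcat2, ?_⟩
    rw [rsum_concat (by rw [hcat1.last, hsingle.first]), rsum_concat (by rw [hp.last, hq.first]),
      rsum_single, Finset.sum_range_succ]
    have step : (if k = 0 then 0 else v (k - 1)) = e := rfl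
    rw [step]
    have : rsum f x t n + rsum f y s m + (v k - u k) * f (τ k) -
        ((∑ i ∈ Finset.range k, ((v i - u i) * f (τ i) +
          F (if i = 0 then 0 else v (i - 1)) (u i))) + ((v k - u k) * f (τ k) + F e (u k)))
        = (rsum f x t n - ∑ i ∈ Finset.range k, ((v i - u i) * f (τ i) +
          F (if i = 0 then 0 else v (i - 1)) (u i))) + (rsum f y s m - F e (u k)) := by ring
    rw [this]
    calc |_ + _| ≤ _ + _ := abs_add_le _ _
      _ ≤ k * η + η := add_le_add hbound (le_of_lt hqc)
      _ = (k + 1 : ℕ) * η := by push_cast; ring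

/-- Telescoping `F` along the chain with gaps. -/
theorem tele2 (hF : ∀ a b : ℝ, 0 ≤ a → a ≤ b → b ≤ 1 → HasHKIntegral f a b (F a b))
    (h1 : ∀ i < k, u i ≤ v i) (h2 : ∀ i, i + 1 < k → v i ≤ u (i + 1))
    (h3 : ∀ i < k, 0 ≤ u i) (h4 : ∀ i < k, v i ≤ 1) :
    F 0 (if k = 0 then 0 else v (k - 1)) = ∑ i ∈ Finset.range k,
      (F (if i = 0 then 0 else v (i - 1)) (u i) + F (u i) (v i)) := by
  induction k with
  | zero => simpa using F_self hF le_rfl zero_le_one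
  | succ k ih =>
    have hk1 : k < k + 1 := by omega
    set e : ℝ := if k = 0 then 0 else v (k - 1) with he
    have h0e : 0 ≤ e := by
      rw [he]; split
      · exact le_rfl
      · rename_i hk0
        have hk' : k - 1 < k + 1 := by omega
        exact le_trans (h3 _ hk') (h1 _ hk')
    have heu : e ≤ u k := by
      rw [he]; split
      · rename_i hk0; subst hk0; exact h3 0 hk1
      · rename_i hk0
        have := h2 (k-1) (by omega)
        rwa [show k - 1 + 1 = k by omega] at this
    have huv : u k ≤ v k := h1 k hk1
    have hv1 : v k ≤ 1 := h4 k hk1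
    have ihe := ih (fun i hi => h1 i (by omega)) (fun i hi => h2 i (by omega))
      (fun i hi => h3 i (by omega)) (fun i hi => h4 i (by omega))
    rw [Finset.sum_range_succ, ← ihe]
    have e1 : F 0 (u k) = F 0 e + F e (u k) := F_additive hF le_rfl h0e heu (le_trans huv hv1)
    have e2 : F 0 (v k) = F 0 (u k) + F (u k) (v k) :=
      F_additive hF le_rfl (le_trans h0e heu) huv hv1
    simp only [Nat.add_sub_cancel, if_neg (Nat.succ_ne_zero k)]
    rw [e2, e1]; ring

/-- Henstock's lemma, chain version: the full sum over a δ-fine partial tagged system. -/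
theorem henstock_chain (hF : ∀ a b : ℝ, 0 ≤ a → a ≤ b → b ≤ 1 → HasHKIntegral f a b (F a b))
    {ε : ℝ} (hδp : ∀ s, 0 < δ s)
    (hδ : ∀ n x t, NatPart δ n 0 1 x t → |rsum f x t n - F 0 1| < ε)
    (h1 : ∀ i < k, u i ≤ v i) (h2 : ∀ i, i + 1 < k → v i ≤ u (i + 1))
    (h3 : ∀ i < k, 0 ≤ u i) (h4 : ∀ i < k, v i ≤ 1)
    (htagl : ∀ i < k, u i ≤ τ i) (htagr : ∀ i < k, τ i ≤ v i)
    (hfl : ∀ i < k, τ i - δ (τ i) ≤ u i) (hfr : ∀ i < k, v i ≤ τ i + δ (τ i)) :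
    |∑ i ∈ Finset.range k, ((v i - u i) * f (τ i) - F (u i) (v i))| ≤ ε := by
  apply le_of_forall_pos_le_add
  intro η' hη'
  have hη : (0:ℝ) < η' / (k + 2) := by positivity
  obtain ⟨n, x, t, hp, hbound⟩ := patchwork hF hδp h1 h2 h3 h4 htagl htagr hfl hfr hη
  set e : ℝ := if k = 0 then 0 else v (k - 1) with he
  have h0e : 0 ≤ e := by
    rw [he]; split
    · exact le_rfl
    · rename_i hk0
      have hk' : k - 1 < k := by omega
      exact le_trans (h3 _ hk') (h1 _ hk')
  have he1 : e ≤ 1 := by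
    rw [he]; split
    · exact zero_le_one
    · exact h4 _ (by omega)
  obtain ⟨m, y, s, hq, hqc⟩ := fine_part_close hF hδp h0e he1 le_rfl hη
  have hcat := hp.concat hq
  have hmain := hδ _ _ _ hcat
  rw [rsum_concat (by rw [hp.last, hq.first])] at hmain
  have htel : F 0 1 = (∑ i ∈ Finset.range k,
      (F (if i = 0 then 0 else v (i - 1)) (u i) + F (u i) (v i))) + F e 1 := by
    rw [← tele2 hF h1 h2 h3 h4, ← he]
    exact F_additive hF le_rfl h0e he1 le_rfl
  set T1T2 := ∑ i ∈ Finset.range k, ((v i - u i) * f (τ i) +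
    F (if i = 0 then 0 else v (i - 1)) (u i)) with hT
  have expand : ∑ i ∈ Finset.range k, ((v i - u i) * f (τ i) - F (u i) (v i))
      = T1T2 - (∑ i ∈ Finset.range k,
        (F (if i = 0 then 0 else v (i - 1)) (u i) + F (u i) (v i))) := by
    rw [hT, ← Finset.sum_sub_distrib]
    exact Finset.sum_congr rfl fun i _ => by ring
  rw [htel] at hmain
  rw [expand, abs_le]
  rw [abs_le] at hbound
  rw [abs_lt] at hqc hmain
  have hkη : (k:ℝ) * (η' / (k + 2)) + 2 * (η' / (k+2)) ≤ η' := by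
    rw [div_eq_inv_mul]
    have hk2 : (0:ℝ) < (k:ℝ) + 2 := by positivity
    rw [show (k:ℝ) * ((k+2:ℝ)⁻¹ * η') + 2 * ((k+2:ℝ)⁻¹ * η') = ((k:ℝ)+2) * ((k+2:ℝ)⁻¹ * η') by ring,
      ← mul_assoc, mul_inv_cancel₀ (ne_of_gt hk2), one_mul]
  constructor <;> linarith

end Chain
end HKAux
namespace HKAux

variable {f : ℝ → ℝ} {F : ℝ → ℝ → ℝ}

theorem sort_intervals (s : Finset (ℝ × ℝ × ℝ))
    (hlen : ∀ a ∈ s, a.1 < a.2.1)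
    (hdisj : ∀ a ∈ s, ∀ b ∈ s, a ≠ b → Disjoint (Set.Icc a.1 a.2.1) (Set.Icc b.1 b.2.1)) :
    ∃ g : Fin s.card → ℝ × ℝ × ℝ,
      (∀ j, g j ∈ s) ∧
      (∀ h : ℝ × ℝ × ℝ → ℝ, ∑ a ∈ s, h a = ∑ j, h (g j)) ∧
      (∀ j j' : Fin s.card, (j:ℕ) < (j':ℕ) → (g j).2.1 ≤ (g j').1) := by
  classical
  have hinj : Set.InjOn (Prod.fst : ℝ × ℝ × ℝ → ℝ) ↑s := by
    intro a ha b hb hab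
    by_contra hne
    have h1 : a.1 ∈ Set.Icc a.1 a.2.1 := ⟨le_rfl, le_of_lt (hlen a ha)⟩
    have h2 : a.1 ∈ Set.Icc b.1 b.2.1 := ⟨le_of_eq hab.symm,
      hab ▸ le_of_lt (hlen b hb)⟩
    exact Set.disjoint_left.mp (hdisj a ha b hb hne) h1 h2
  set lefts := s.image Prod.fst with hlefts
  have hcard : lefts.card = s.card := by
    rw [hlefts]; exact Finset.card_image_of_injOn hinj
  set iso := lefts.orderIsoOfFin hcard with hiso
  have hexu : ∀ j : Fin s.card, ∃! a, a ∈ s ∧ a.1 = (iso j : ℝ) := by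
    intro j
    have hmem : (iso j : ℝ) ∈ lefts := (iso j).2
    obtain ⟨a, ha, hfst⟩ := Finset.mem_image.mp hmem
    exact ⟨a, ⟨ha, hfst⟩, fun b hb => hinj hb.1 ha (by rw [hb.2, hfst])⟩
  set g : Fin s.card → ℝ × ℝ × ℝ := fun j => Finset.choose _ s (hexu j) with hg
  have hgmem : ∀ j, g j ∈ s := fun j => Finset.choose_mem _ s (hexu j)
  have hgfst : ∀ j, (g j).1 = (iso j : ℝ) := fun j => Finset.choose_property _ s (hexu j)
  have hglt : ∀ j j' : Fin s.card, (j:ℕ) < (j':ℕ) → (g j).1 < (g j').1 := by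
    intro j j' hjj
    rw [hgfst, hgfst]
    exact_mod_cast iso.strictMono (show j < j' from hjj)
  have hginj : Function.Injective g := by
    intro j j' hjj
    have : (iso j : ℝ) = (iso j' : ℝ) := by rw [← hgfst, ← hgfst, hjj]
    have : iso j = iso j' := Subtype.ext this
    exact iso.injective this
  refine ⟨g, hgmem, ?_, ?_⟩
  · intro h
    refine (Finset.sum_bij (fun (j : Fin s.card) (_ : j ∈ Finset.univ) => g j)
      (fun j _ => hgmem j) (fun j _ j' _ h => hginj h) ?_ (fun j _ => rfl)).symm
    intro a ha
    have hmem : a.1 ∈ lefts := Finset.mem_image_of_mem _ ha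
    refine ⟨iso.symm ⟨a.1, hmem⟩, Finset.mem_univ _, ?_⟩
    apply hinj (hgmem _) ha
    rw [hgfst]
    simp
  · intro j j' hjj
    by_contra hcon
    push_neg at hcon
    have hne : g j ≠ g j' := fun h => absurd (congrArg Prod.fst h) (ne_of_lt (hglt j j' hjj))
    have h1 : (g j').1 ∈ Set.Icc (g j).1 (g j).2.1 := ⟨le_of_lt (hglt j j' hjj), le_of_lt hcon⟩
    have h2 : (g j').1 ∈ Set.Icc (g j').1 (g j').2.1 :=
      ⟨le_rfl, le_of_lt (hlen _ (hgmem j'))⟩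
    exact Set.disjoint_left.mp (hdisj _ (hgmem j) _ (hgmem j') hne) h1 h2

/-- Henstock's lemma for a finite disjoint family of δ-fine tagged intervals in `[0,1]`. -/
theorem henstock_finset (hF : ∀ a b : ℝ, 0 ≤ a → a ≤ b → b ≤ 1 → HasHKIntegral f a b (F a b))
    {ε : ℝ} {δ : ℝ → ℝ} (hδp : ∀ s, 0 < δ s)
    (hδ : ∀ n x t, NatPart δ n 0 1 x t → |rsum f x t n - F 0 1| < ε)
    (s : Finset (ℝ × ℝ × ℝ))
    (hmem : ∀ a ∈ s, 0 ≤ a.1 ∧ a.1 < a.2.1 ∧ a.2.1 ≤ 1 ∧ a.1 ≤ a.2.2 ∧ a.2.2 ≤ a.2.1 ∧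
      a.2.2 - δ a.2.2 ≤ a.1 ∧ a.2.1 ≤ a.2.2 + δ a.2.2)
    (hdisj : ∀ a ∈ s, ∀ b ∈ s, a ≠ b → Disjoint (Set.Icc a.1 a.2.1) (Set.Icc b.1 b.2.1)) :
    ∑ a ∈ s, |(a.2.1 - a.1) * f a.2.2 - F a.1 a.2.1| ≤ 2 * ε := by
  classical
  set e : ℝ × ℝ × ℝ → ℝ := fun a => (a.2.1 - a.1) * f a.2.2 - F a.1 a.2.1 with he
  -- the partial-sum bound for any subfamily
  have key : ∀ sub : Finset (ℝ × ℝ × ℝ), sub ⊆ s → |∑ a ∈ sub, e a| ≤ ε := by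
    intro sub hsub
    obtain ⟨g, hgmem, hgsum, hgord⟩ := sort_intervals sub
      (fun a ha => (hmem a (hsub ha)).2.1)
      (fun a ha b hb hne => hdisj a (hsub ha) b (hsub hb) hne)
    have hprop : ∀ i (h : i < sub.card), g ⟨i, h⟩ ∈ s := fun i h => hsub (hgmem _)
    set u : ℕ → ℝ := fun i => if h : i < sub.card then (g ⟨i, h⟩).1 else 0 with hu
    set v : ℕ → ℝ := fun i => if h : i < sub.card then (g ⟨i, h⟩).2.1 else 0 with hv
    set τ : ℕ → ℝ := fun i => if h : i < sub.card then (g ⟨i, h⟩).2.2 else 0 with hτ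
    have hchain := henstock_chain hF (k := sub.card) (u := u) (v := v) (τ := τ) hδp hδ
      (fun i hi => by simp only [hu, hv, dif_pos hi]; exact le_of_lt (hmem _ (hprop i hi)).2.1)
      (fun i hi => by
        simp only [hu, hv, dif_pos (show i < sub.card by omega), dif_pos hi]
        exact hgord ⟨i, by omega⟩ ⟨i+1, hi⟩ (by simp))
      (fun i hi => by simp only [hu, dif_pos hi]; exact (hmem _ (hprop i hi)).1)
      (fun i hi => by simp only [hv, dif_pos hi]; exact (hmem _ (hprop i hi)).2.2.1)
      (fun i hi => by simp only [hu, hτ, dif_pos hi]; exact (hmem _ (hprop i hi)).2.2.2.1)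
      (fun i hi => by simp only [hv, hτ, dif_pos hi]; exact (hmem _ (hprop i hi)).2.2.2.2.1)
      (fun i hi => by simp only [hu, hτ, dif_pos hi]; exact (hmem _ (hprop i hi)).2.2.2.2.2.1)
      (fun i hi => by simp only [hv, hτ, dif_pos hi]; exact (hmem _ (hprop i hi)).2.2.2.2.2.2)
    have hsum : ∑ i ∈ Finset.range sub.card, ((v i - u i) * f (τ i) - F (u i) (v i))
        = ∑ a ∈ sub, e a := by
      rw [hgsum e, ← Fin.sum_univ_eq_sum_range
        (fun i => (v i - u i) * f (τ i) - F (u i) (v i)) sub.card]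
      exact Finset.sum_congr rfl fun j _ => by
        simp only [hu, hv, hτ, dif_pos j.isLt, he, Fin.eta]
    rwa [hsum] at hchain
  have hsplit := Finset.sum_filter_add_sum_filter_not s (fun a => 0 ≤ e a)
    (fun a => |e a|)
  have hpos : ∑ a ∈ s.filter (fun a => 0 ≤ e a), |e a|
      = ∑ a ∈ s.filter (fun a => 0 ≤ e a), e a :=
    Finset.sum_congr rfl fun a ha => abs_of_nonneg (Finset.mem_filter.mp ha).2
  have hneg : ∑ a ∈ s.filter (fun a => ¬ 0 ≤ e a), |e a|
      = -∑ a ∈ s.filter (fun a => ¬ 0 ≤ e a), e a := by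
    rw [← Finset.sum_neg_distrib]
    exact Finset.sum_congr rfl fun a ha =>
      abs_of_neg (lt_of_not_ge (Finset.mem_filter.mp ha).2)
  have k1 := key _ (Finset.filter_subset (fun a => 0 ≤ e a) s)
  have k2 := key _ (Finset.filter_subset (fun a => ¬ 0 ≤ e a) s)
  rw [abs_le] at k1 k2
  calc ∑ a ∈ s, |e a|
      = ∑ a ∈ s.filter (fun a => 0 ≤ e a), |e a|
        + ∑ a ∈ s.filter (fun a => ¬ 0 ≤ e a), |e a| := hsplit.symm
    _ ≤ ε + ε := by rw [hpos, hneg]; linarith [k1.2, k2.1]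
    _ = 2 * ε := by ring

end HKAux
namespace HKAux

open Filter

variable {f : ℝ → ℝ} {F : ℝ → ℝ → ℝ}

/-- The bad set at scale `1/(k+1)`. -/
def badSet (f : ℝ → ℝ) (F : ℝ → ℝ → ℝ) (k : ℕ) : Set ℝ :=
  {x | x ∈ Set.Ioo (0:ℝ) 1 ∧ ∀ ρ > (0:ℝ), ∃ p q : ℝ, p ≤ x ∧ x ≤ q ∧ 0 < q - p ∧
    q - p < ρ ∧ 0 ≤ p ∧ q ≤ 1 ∧ (q - p) / (k + 1) ≤ |F p q - (q - p) * f x|}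

theorem null_badSet (hF : ∀ a b : ℝ, 0 ≤ a → a ≤ b → b ≤ 1 → HasHKIntegral f a b (F a b))
    (k : ℕ) : volume (badSet f F k) = 0 := by
  classical
  -- reduce to: measure ≤ ofReal η for every positive η
  have key : ∀ η : ℝ, 0 < η → volume (badSet f F k) ≤ ENNReal.ofReal η := by
    intro η hη
    set ε₀ : ℝ := η / (2 * (k + 1)) with hε₀
    have hε₀p : 0 < ε₀ := by positivity
    obtain ⟨δ, hδp, hδ⟩ := hk_nat (hF 0 1 le_rfl zero_le_one le_rfl) ε₀ hε₀p
    set t : Set (ℝ × ℝ × ℝ) := {a | a.2.2 ∈ badSet f F k ∧ a.1 ≤ a.2.2 ∧ a.2.2 ≤ a.2.1 ∧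
      0 < a.2.1 - a.1 ∧ a.2.1 - a.1 < δ a.2.2 ∧ 0 ≤ a.1 ∧ a.2.1 ≤ 1 ∧
      (a.2.1 - a.1) / (k + 1) ≤ |F a.1 a.2.1 - (a.2.1 - a.1) * f a.2.2|} with ht
    obtain ⟨U, hUt, hUc, hUd, hUcov⟩ := Vitali.exists_disjoint_covering_ae volume
      (badSet f F k) t 6 (fun a => a.2.1 - a.1) (fun a => a.2.2)
      (fun a => Set.Icc a.1 a.2.1)
      (fun a ha => by
        obtain ⟨_, h1, h2, _⟩ := ha
        rw [Real.closedBall_eq_Icc]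
        apply Set.Icc_subset_Icc <;> linarith)
      (fun a ha => by
        obtain ⟨_, h1, h2, h3, _⟩ := ha
        rw [Real.volume_closedBall, Real.volume_Icc]
        rw [show (2:ℝ) * (3 * ((fun a : ℝ × ℝ × ℝ => a.2.1 - a.1) a)) = 6 * (a.2.1 - a.1) by ring,
          ENNReal.ofReal_mul (by norm_num)]
        gcongr <;> norm_num)
      (fun a ha => by
        rw [interior_Icc]
        exact Set.nonempty_Ioo.mpr (by obtain ⟨_, _, _, h3, _⟩ := ha; linarith))
      (fun a _ => isClosed_Icc)
      (fun x hx ε hε => by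
        obtain ⟨hx1, hx2⟩ := hx
        obtain ⟨p, q, h1, h2, h3, h4, h5, h6, h7⟩ := hx2 (min ε (δ x)) (lt_min hε (hδp x))
        exact ⟨(p, q, x), ⟨⟨hx1, hx2⟩, h1, h2, h3, lt_of_lt_of_le h4 (min_le_right _ _),
          h5, h6, h7⟩, le_of_lt (lt_of_lt_of_le h4 (min_le_left _ _)), rfl⟩)
    calc volume (badSet f F k)
        ≤ volume (badSet f F k ∩ ⋃ a ∈ U, Set.Icc a.1 a.2.1)
          + volume (badSet f F k \ ⋃ a ∈ U, Set.Icc a.1 a.2.1) :=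
          measure_le_inter_add_diff _ _ _
      _ ≤ volume (⋃ a ∈ U, Set.Icc a.1 a.2.1) + 0 := by
          rw [hUcov]; gcongr; exact Set.inter_subset_right
      _ = volume (⋃ a ∈ U, Set.Icc a.1 a.2.1) := by rw [add_zero]
      _ ≤ ∑' (a : ↑U), volume (Set.Icc (a:ℝ × ℝ × ℝ).1 (a:ℝ × ℝ × ℝ).2.1) :=
          measure_biUnion_le volume hUc _
      _ ≤ ENNReal.ofReal η := by
          apply tsum_le_of_sum_le' (zero_le ..)
          intro J
          set sfin : Finset (ℝ × ℝ × ℝ) := J.image Subtype.val with hsfin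
          have hval_inj : ∀ x ∈ J, ∀ y ∈ J, (x:ℝ×ℝ×ℝ) = (y:ℝ×ℝ×ℝ) → x = y :=
            fun x _ y _ h => Subtype.ext h
          have hsum_eq : (∑ a ∈ sfin, volume (Set.Icc a.1 a.2.1))
              = ∑ a ∈ J, volume (Set.Icc (a:ℝ×ℝ×ℝ).1 (a:ℝ×ℝ×ℝ).2.1) :=
            Finset.sum_image hval_inj
          rw [← hsum_eq]
          have hsub : ∀ a ∈ sfin, a ∈ t := by
            intro a ha
            obtain ⟨b, _, rfl⟩ := Finset.mem_image.mp ha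
            exact hUt b.2
          have hh := henstock_finset hF hδp hδ sfin
            (fun a ha => by
              obtain ⟨_, h1, h2, h3, h4, h5, h6, _⟩ := hsub a ha
              exact ⟨h5, by linarith, h6, h1, h2, by linarith, by linarith⟩)
            (fun a ha b hb hne => by
              have haU : a ∈ U := by
                obtain ⟨a', ha', rfl⟩ := Finset.mem_image.mp ha; exact a'.2
              have hbU : b ∈ U := by
                obtain ⟨b', hb', rfl⟩ := Finset.mem_image.mp hb; exact b'.2
              exact hUd haU hbU hne)
          have hterm : ∀ a ∈ sfin, (a.2.1 - a.1) / (k+1)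
              ≤ |(a.2.1 - a.1) * f a.2.2 - F a.1 a.2.1| := by
            intro a ha
            rw [abs_sub_comm]
            exact (hsub a ha).2.2.2.2.2.2.2
          have hlen : ∑ a ∈ sfin, (a.2.1 - a.1) ≤ η := by
            have h1 : (∑ a ∈ sfin, (a.2.1 - a.1)) / (k+1)
                ≤ ∑ a ∈ sfin, |(a.2.1 - a.1) * f a.2.2 - F a.1 a.2.1| := by
              rw [Finset.sum_div]
              exact Finset.sum_le_sum hterm
            have h2 : (∑ a ∈ sfin, (a.2.1 - a.1)) / (k+1) ≤ 2 * ε₀ := le_trans h1 hh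
            have hk1 : (0:ℝ) < (k:ℝ) + 1 := by positivity
            have := (div_le_iff₀ hk1).mp h2
            rw [hε₀] at this
            calc ∑ a ∈ sfin, (a.2.1 - a.1) ≤ 2 * (η / (2 * (k+1))) * ((k:ℝ)+1) := this
              _ = η := by field_simp
          calc ∑ a ∈ sfin, volume (Set.Icc a.1 a.2.1)
              = ∑ a ∈ sfin, ENNReal.ofReal (a.2.1 - a.1) := by
                exact Finset.sum_congr rfl fun a _ => Real.volume_Icc
            _ = ENNReal.ofReal (∑ a ∈ sfin, (a.2.1 - a.1)) :=
                (ENNReal.ofReal_sum_of_nonneg (fun a ha => by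
                  have := (hsub a ha).2.2.2.1; linarith)).symm
            _ ≤ ENNReal.ofReal η := ENNReal.ofReal_le_ofReal hlen
  refine le_antisymm ?_ (zero_le ..)
  have htend : Tendsto (fun n : ℕ => ENNReal.ofReal (1 / (n + 1))) atTop (nhds 0) := by
    rw [show (0:ENNReal) = ENNReal.ofReal 0 by simp]
    exact (ENNReal.continuous_ofReal.tendsto 0).comp tendsto_one_div_add_atTop_nhds_zero_nat
  exact ge_of_tendsto' htend (fun n => key _ (by positivity))

end HKAux
namespace HKAux

open Filter

variable {f : ℝ → ℝ} {F : ℝ → ℝ → ℝ}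

theorem ae_hasDerivAt (hF : ∀ a b : ℝ, 0 ≤ a → a ≤ b → b ≤ 1 → HasHKIntegral f a b (F a b)) :
    ∀ᵐ x, x ∈ Set.Ioo (0:ℝ) 1 → HasDerivAt (fun y => F 0 (max 0 (min 1 y))) (f x) x := by
  have hGeq : ∀ y ∈ Set.Icc (0:ℝ) 1, F 0 (max 0 (min 1 y)) = F 0 y := by
    intro y hy
    rw [min_eq_right hy.2, max_eq_right hy.1]
  have hnull : volume (⋃ k : ℕ, badSet f F k) = 0 := by
    refine le_antisymm (le_trans (measure_iUnion_le _) ?_) (zero_le ..)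
    simp [null_badSet hF]
  rw [ae_iff]
  apply measure_mono_null _ hnull
  intro x hx
  simp only [Set.mem_setOf_eq] at hx
  rw [Classical.not_imp] at hx
  obtain ⟨hxI, hxD⟩ := hx
  by_contra hnot
  apply hxD
  simp only [Set.mem_iUnion] at hnot
  push_neg at hnot
  have hx0 : 0 < x := hxI.1
  have hx1 : x < 1 := hxI.2
  rw [hasDerivAt_iff_isLittleO, Asymptotics.isLittleO_iff]
  intro c hc
  obtain ⟨k, hk⟩ := exists_nat_gt (1 / c)
  have hkc : 1 < c * ((k:ℝ) + 1) := by
    have h1 := (div_lt_iff₀ hc).mp hk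
    nlinarith
  have hxk := hnot k
  rw [badSet] at hxk
  simp only [Set.mem_setOf_eq, not_and] at hxk
  have hxk2 := hxk hxI
  push_neg at hxk2
  obtain ⟨ρ, hρ, hgood⟩ := hxk2
  have hρ' : 0 < min ρ (min x (1 - x)) := lt_min hρ (lt_min hx0 (by linarith))
  filter_upwards [Metric.ball_mem_nhds x hρ'] with y hy
  rw [Metric.mem_ball, Real.dist_eq] at hy
  rw [abs_lt] at hy
  have hyρ1 : y - x < min ρ (min x (1-x)) := hy.2
  have hyρ2 : -(min ρ (min x (1-x))) < y - x := hy.1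
  have hm1 : min ρ (min x (1-x)) ≤ ρ := min_le_left _ _
  have hm2 : min ρ (min x (1-x)) ≤ x := le_trans (min_le_right _ _) (min_le_left _ _)
  have hm3 : min ρ (min x (1-x)) ≤ 1 - x := le_trans (min_le_right _ _) (min_le_right _ _)
  have hy0 : 0 ≤ y := by linarith
  have hy1 : y ≤ 1 := by linarith
  simp only [Real.norm_eq_abs, smul_eq_mul]
  rw [hGeq y ⟨hy0, hy1⟩, hGeq x ⟨hx0.le, hx1.le⟩]
  rcases le_or_gt x y with hxy | hxy
  · rcases eq_or_lt_of_le hxy with heq | hlt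
    · subst heq; simp
    · have hbd := hgood x y le_rfl hxy (by linarith) (by linarith) hx0.le hy1
      have hadd : F 0 y = F 0 x + F x y := F_additive hF le_rfl hx0.le hxy hy1
      have habs : |y - x| = y - x := abs_of_pos (by linarith)
      rw [habs]
      have : F 0 y - F 0 x - (y - x) * f x = F x y - (y - x) * f x := by rw [hadd]; ring
      rw [this]
      have hfrac : (y - x) / ((k:ℝ) + 1) ≤ c * (y - x) := by
        rw [div_le_iff₀ (by positivity)]
        nlinarith
      linarith
  · have hbd := hgood y x hxy.le le_rfl (by linarith) (by linarith) hy0 hx1.le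
    have hadd : F 0 x = F 0 y + F y x := F_additive hF le_rfl hy0 hxy.le hx1.le
    have habs : |y - x| = x - y := by rw [abs_of_neg (show y - x < 0 by linarith)]; ring
    rw [habs]
    have : F 0 y - F 0 x - (y - x) * f x = -(F y x - (x - y) * f x) := by rw [hadd]; ring
    rw [this, abs_neg]
    have hfrac : (x - y) / ((k:ℝ) + 1) ≤ c * (x - y) := by
      rw [div_le_iff₀ (by positivity)]
      nlinarith
    linarith

end HKAux
namespace HKAux

/-- Candidate variation sums of `F` over chains from `0` to `b`. -/
def varSet (F : ℝ → ℝ → ℝ) (b : ℝ) : Set ℝ :=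
  {S | ∃ (n : ℕ) (x : ℕ → ℝ), (∀ i < n, x i ≤ x (i + 1)) ∧ x 0 = 0 ∧ x n = b ∧
    S = ∑ i ∈ Finset.range n, |F (x i) (x (i + 1))|}

theorem varSet_nonempty {F : ℝ → ℝ → ℝ} {b : ℝ} (hb : 0 ≤ b) : |F 0 b| ∈ varSet F b := by
  refine ⟨1, fun i => if i = 0 then 0 else b, ?_, by simp, by simp, by simp⟩
  intro i hi
  interval_cases i
  simpa using hb

theorem varSet_le {F : ℝ → ℝ → ℝ} {M : ℝ}
    (hM : ∀ (n : ℕ) (x : Fin (n + 1) → ℝ), IsIntervalPartition n 0 1 x →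
      (∑ i : Fin n, |F (x i.castSucc) (x i.succ)|) ≤ M)
    {b : ℝ} (hb0 : 0 ≤ b) (hb1 : b ≤ 1) : ∀ S ∈ varSet F b, S ≤ M := by
  rintro S ⟨n, x, hmono, h0, hn, rfl⟩
  set x' : ℕ → ℝ := fun i => if i ≤ n then x i else 1 with hx'
  have hx'v : ∀ i ≤ n, x' i = x i := fun i hi => if_pos hi
  have hx'mono : ∀ i < n + 1, x' i ≤ x' (i + 1) := by
    intro i hi
    rcases Nat.lt_or_ge i n with h | h
    · rw [hx'v i (by omega), hx'v (i+1) (by omega)]; exact hmono i h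
    · have hin : i = n := by omega
      subst hin
      rw [hx'v i le_rfl]
      simp only [hx', if_neg (by omega : ¬ i + 1 ≤ i)]
      rw [show x i = b from hn]
      exact hb1
  have key := hM (n + 1) (fun i => x' i.val)
    ⟨fun i j hij => chain_mono hx'mono j.val (Nat.lt_succ_iff.mp j.isLt) i.val hij,
      by simpa [hx'] using h0, by simp [hx', Nat.lt_irrefl]⟩
  have hconv : (∑ i : Fin (n+1), |F ((fun i : Fin (n+2) => x' i.val) i.castSucc)
      ((fun i : Fin (n+2) => x' i.val) i.succ)|)
      = ∑ i ∈ Finset.range (n+1), |F (x' i) (x' (i+1))| := by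
    rw [show (∑ i : Fin (n+1), |F ((fun i : Fin (n+2) => x' i.val) i.castSucc)
      ((fun i : Fin (n+2) => x' i.val) i.succ)|)
      = ∑ i : Fin (n+1), (fun k => |F (x' k) (x' (k+1))|) i.val from
      Finset.sum_congr rfl (fun i _ => by simp)]
    rw [Fin.sum_univ_eq_sum_range (fun k => |F (x' k) (x' (k+1))|) (n+1)]
  rw [hconv, Finset.sum_range_succ] at key
  have hsame : ∑ i ∈ Finset.range n, |F (x i) (x (i+1))|
      = ∑ i ∈ Finset.range n, |F (x' i) (x' (i+1))| :=
    Finset.sum_congr rfl fun i hi => by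
      have hi' := Finset.mem_range.mp hi
      rw [hx'v i (by omega), hx'v (i+1) (by omega)]
  rw [hsame]
  have := abs_nonneg (F (x' n) (x' (n+1)))
  linarith

theorem var_append {F : ℝ → ℝ → ℝ} {p q : ℝ} (hpq : p ≤ q) :
    ∀ S ∈ varSet F p, S + |F p q| ∈ varSet F q := by
  rintro S ⟨n, x, hmono, h0, hn, rfl⟩
  set x' : ℕ → ℝ := fun i => if i ≤ n then x i else q with hx'
  have hx'v : ∀ i ≤ n, x' i = x i := fun i hi => if_pos hi
  refine ⟨n + 1, x', ?_, by simpa [hx'] using h0, by simp [hx', Nat.lt_irrefl], ?_⟩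
  · intro i hi
    rcases Nat.lt_or_ge i n with h | h
    · rw [hx'v i (by omega), hx'v (i+1) (by omega)]; exact hmono i h
    · have hin : i = n := by omega
      subst hin
      rw [hx'v i le_rfl]
      simp only [hx', if_neg (by omega : ¬ i + 1 ≤ i)]
      rw [show x i = p from hn]
      exact hpq
  · rw [Finset.sum_range_succ, hx'v n le_rfl, hn]
    simp only [hx', if_neg (by omega : ¬ n + 1 ≤ n)]
    congr 1
    exact Finset.sum_congr rfl fun i hi => by
      have hi' := Finset.mem_range.mp hi
      rw [if_pos (show i ≤ n by omega), if_pos (show i + 1 ≤ n by omega)]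

theorem var_step {F : ℝ → ℝ → ℝ} {M : ℝ}
    (hM : ∀ (n : ℕ) (x : Fin (n + 1) → ℝ), IsIntervalPartition n 0 1 x →
      (∑ i : Fin n, |F (x i.castSucc) (x i.succ)|) ≤ M)
    {p q : ℝ} (hp : 0 ≤ p) (hpq : p ≤ q) (hq : q ≤ 1) :
    sSup (varSet F p) + |F p q| ≤ sSup (varSet F q) := by
  have hbdd : BddAbove (varSet F q) := ⟨M, fun S hS => varSet_le hM (le_trans hp hpq) hq S hS⟩
  have h1 : sSup (varSet F p) ≤ sSup (varSet F q) - |F p q| := by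
    apply csSup_le ⟨|F 0 p|, varSet_nonempty hp⟩
    intro S hS
    have := le_csSup hbdd (var_append hpq S hS)
    linarith
  linarith

end HKAux

open HKAux Filter in
/-- If `f` is Henstock–Kurzweil integrable on `[0,1]` and the interval variation of its
indefinite integral `F` is finite, then `f` is Lebesgue integrable on `[0,1]`. -/
theorem lebesgue_integrable_of_HK_finite_interval_variation
    (f : ℝ → ℝ) (F : ℝ → ℝ → ℝ)
    (hF : ∀ a b : ℝ, 0 ≤ a → a ≤ b → b ≤ 1 → HasHKIntegral f a b (F a b))
    (hvar : ∃ M : ℝ, ∀ (n : ℕ) (x : Fin (n + 1) → ℝ), IsIntervalPartition n 0 1 x →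
      (∑ i : Fin n, |F (x i.castSucc) (x i.succ)|) ≤ M) :
    IntegrableOn f (Set.Icc (0 : ℝ) 1) volume := by
  classical
  obtain ⟨M, hM⟩ := hvar
  set cl : ℝ → ℝ := fun y => max 0 (min 1 y) with hcl
  have hcl0 : ∀ y, 0 ≤ cl y := fun y => le_max_left _ _
  have hcl1 : ∀ y, cl y ≤ 1 := fun y => max_le zero_le_one (min_le_left _ _)
  have hclmono : Monotone cl := fun a b h => max_le_max le_rfl (min_le_min le_rfl h)
  set G : ℝ → ℝ := fun y => F 0 (cl y) with hG
  set V : ℝ → ℝ := fun y => sSup (varSet F (cl y)) with hV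
  have hstep : ∀ y z : ℝ, y ≤ z → V y + |F (cl y) (cl z)| ≤ V z :=
    fun y z h => var_step hM (hcl0 y) (hclmono h) (hcl1 z)
  have hVmono : Monotone V := fun y z h => by
    have h1 := hstep y z h; have h2 := abs_nonneg (F (cl y) (cl z)); linarith
  have hV0 : ∀ y, 0 ≤ V y := fun y =>
    le_trans (abs_nonneg _) (le_csSup ⟨M, fun S hS => varSet_le hM (hcl0 y) (hcl1 y) S hS⟩
      (varSet_nonempty (hcl0 y)))
  have hVM : ∀ y, V y ≤ M := fun y =>
    csSup_le ⟨_, varSet_nonempty (hcl0 y)⟩ (fun S hS => varSet_le hM (hcl0 y) (hcl1 y) S hS)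
  have hM0 : 0 ≤ M := le_trans (hV0 0) (hVM 0)
  have hslope : ∀ y z : ℝ, y ≤ z → |G z - G y| ≤ V z - V y := by
    intro y z h
    have hadd : F 0 (cl z) = F 0 (cl y) + F (cl y) (cl z) :=
      F_additive hF le_rfl (hcl0 y) (hclmono h) (hcl1 z)
    have heq : G z - G y = F (cl y) (cl z) := by rw [hG]; simp only; rw [hadd]; ring
    rw [heq]
    have := hstep y z h
    linarith
  have hVmeas : Measurable V := hVmono.measurable
  have hGae := ae_hasDerivAt hF
  have hVae := hVmono.ae_differentiableAt
  -- pointwise bound |f x| ≤ deriv V x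
  have hbound : ∀ x ∈ Set.Ioo (0:ℝ) 1, HasDerivAt G (f x) x → DifferentiableAt ℝ V x →
      |f x| ≤ deriv V x := by
    intro x _ hG' hV'
    have hsub : Set.Ioi x ⊆ {x}ᶜ := fun y hy => ne_of_gt hy
    have tG : Tendsto (fun y => |slope G x y|) (nhdsWithin x (Set.Ioi x)) (nhds |f x|) :=
      (continuous_abs.tendsto _).comp
        ((hasDerivAt_iff_tendsto_slope.mp hG').mono_left (nhdsWithin_mono x hsub))
    have tV : Tendsto (slope V x) (nhdsWithin x (Set.Ioi x)) (nhds (deriv V x)) :=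
      (hasDerivAt_iff_tendsto_slope.mp hV'.hasDerivAt).mono_left (nhdsWithin_mono x hsub)
    refine le_of_tendsto_of_tendsto tG tV ?_
    filter_upwards [self_mem_nhdsWithin] with y hy
    have hyx : x < y := hy
    have hpos : (0:ℝ) < y - x := by linarith
    rw [slope_def_field, slope_def_field, abs_div, abs_of_pos hpos]
    exact div_le_div_of_nonneg_right (hslope x y hyx.le) hpos.le
  -- a.e. membership in the open interval
  have hIoo : ∀ᵐ x ∂volume.restrict (Set.Icc (0:ℝ) 1), x ∈ Set.Ioo (0:ℝ) 1 := by
    rw [ae_iff]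
    have hsub : {x : ℝ | ¬ x ∈ Set.Ioo (0:ℝ) 1} ∩ Set.Icc (0:ℝ) 1 ⊆ ({0, 1} : Set ℝ) := by
      rintro x ⟨hx1, hx2⟩
      simp only [Set.mem_setOf_eq, Set.mem_Ioo, not_and_or, not_lt] at hx1
      simp only [Set.mem_insert_iff, Set.mem_singleton_iff]
      rcases hx1 with h | h
      · left; linarith [hx2.1]
      · right; linarith [hx2.2]
    have hrw : volume.restrict (Set.Icc (0:ℝ) 1) {x : ℝ | ¬ x ∈ Set.Ioo (0:ℝ) 1}
        = volume ({x : ℝ | ¬ x ∈ Set.Ioo (0:ℝ) 1} ∩ Set.Icc (0:ℝ) 1) :=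
      Measure.restrict_apply (measurableSet_Ioo.compl)
    rw [hrw]
    refine le_antisymm (le_trans (measure_mono hsub) (le_of_eq ?_)) (zero_le ..)
    exact ((Set.finite_singleton 1).insert 0).measure_zero volume
  -- measurability of f
  have hfd : f =ᶠ[ae (volume.restrict (Set.Icc (0:ℝ) 1))] deriv G := by
    filter_upwards [hIoo, ae_restrict_of_ae hGae] with x hx hG'
    exact ((hG' hx).deriv).symm
  have hmeasf : AEStronglyMeasurable f (volume.restrict (Set.Icc (0:ℝ) 1)) :=
    ((measurable_deriv G).aestronglyMeasurable).congr hfd.symm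
  -- finiteness of the integral
  have hfV : ∀ᵐ x ∂volume.restrict (Set.Icc (0:ℝ) 1), |f x| ≤ deriv V x := by
    filter_upwards [hIoo, ae_restrict_of_ae hGae, ae_restrict_of_ae hVae] with x hx h1 h2
    exact hbound x hx (h1 hx) h2
  set g : ℕ → ℝ → ENNReal := fun n x =>
    ENNReal.ofReal ((V (x + 1/((n:ℝ)+1)) - V x) * ((n:ℝ)+1)) with hg
  have hgmeas : ∀ n, Measurable (g n) :=
    fun n => ENNReal.measurable_ofReal.comp
      (((hVmeas.comp (measurable_add_const _)).sub hVmeas).mul_const _)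
  have hglim : ∀ x, DifferentiableAt ℝ V x →
      liminf (fun n => g n x) atTop = ENNReal.ofReal (deriv V x) := by
    intro x hV'
    apply Filter.Tendsto.liminf_eq
    have hy : Tendsto (fun n : ℕ => x + 1/((n:ℝ)+1)) atTop (nhdsWithin x {x}ᶜ) := by
      apply tendsto_nhdsWithin_of_tendsto_nhds_of_eventually_within
      · have h1 := tendsto_one_div_add_atTop_nhds_zero_nat (𝕜 := ℝ)
        have h2 := (tendsto_const_nhds (x := x) (f := atTop (α := ℕ))).add h1
        simpa using h2
      · apply Eventually.of_forall
        intro n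
        simp only [Set.mem_compl_iff, Set.mem_singleton_iff]
        have hpos : (0:ℝ) < 1/((n:ℝ)+1) := by positivity
        exact ne_of_gt (lt_add_of_pos_right x hpos)
    have hT := (hasDerivAt_iff_tendsto_slope.mp hV'.hasDerivAt).comp hy
    have hT' : Tendsto (fun n : ℕ => (V (x + 1/((n:ℝ)+1)) - V x) * ((n:ℝ)+1)) atTop
        (nhds (deriv V x)) := by
      apply hT.congr
      intro n
      show slope V x (x + 1/((n:ℝ)+1)) = _
      rw [slope_def_field, add_sub_cancel_left, div_eq_mul_inv, one_div, inv_inv]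
    exact ENNReal.tendsto_ofReal hT'
  have hfin1 : ∫⁻ x in Set.Icc (0:ℝ) 1, ↑‖f x‖₊
      ≤ liminf (fun n => ∫⁻ x in Set.Icc (0:ℝ) 1, g n x) atTop := by
    calc ∫⁻ x in Set.Icc (0:ℝ) 1, ↑‖f x‖₊
        ≤ ∫⁻ x in Set.Icc (0:ℝ) 1, liminf (fun n => g n x) atTop := by
          apply lintegral_mono_ae
          filter_upwards [hfV, ae_restrict_of_ae hVae] with x h1 h2
          rw [hglim x h2]
          exact (le_of_eq (Real.enorm_eq_ofReal_abs (f x))).trans (ENNReal.ofReal_le_ofReal h1)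
      _ ≤ _ := lintegral_liminf_le hgmeas
  have hbound2 : ∀ n, ∫⁻ x in Set.Icc (0:ℝ) 1, g n x ≤ ENNReal.ofReal M := by
    intro n
    set hstep : ℝ := 1/((n:ℝ)+1) with hh
    have hhpos : 0 < hstep := by positivity
    have hW : ∀ x : ℝ, 0 ≤ (V (x + hstep) - V x) * ((n:ℝ)+1) := fun x =>
      mul_nonneg (by have := hVmono (le_add_of_nonneg_right hhpos.le : x ≤ x + hstep); linarith)
        (by positivity)
    have hWb : ∀ x : ℝ, (V (x + hstep) - V x) * ((n:ℝ)+1) ≤ M * ((n:ℝ)+1) := fun x => by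
      have h1 : V (x + hstep) - V x ≤ M := by
        have := hVM (x + hstep); have := hV0 x; linarith
      have h2 : (0:ℝ) ≤ (n:ℝ)+1 := by positivity
      exact mul_le_mul_of_nonneg_right h1 h2
    have hint : IntegrableOn (fun x => (V (x + hstep) - V x) * ((n:ℝ)+1))
        (Set.Icc (0:ℝ) 1) volume := by
      apply Measure.integrableOn_of_bounded (M := M * ((n:ℝ)+1))
      · rw [Real.volume_Icc]; exact ENNReal.ofReal_ne_top
      · exact (((hVmeas.comp (measurable_add_const _)).sub hVmeas).mul_const
          _).aestronglyMeasurable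
      · apply Eventually.of_forall
        intro x
        rw [Real.norm_eq_abs, abs_of_nonneg (hW x)]
        exact hWb x
    have heq : ∫⁻ x in Set.Icc (0:ℝ) 1, g n x
        = ENNReal.ofReal (∫ x in Set.Icc (0:ℝ) 1, (V (x + hstep) - V x) * ((n:ℝ)+1)) :=
      (ofReal_integral_eq_lintegral_ofReal hint (Eventually.of_forall hW)).symm
    rw [heq]
    apply ENNReal.ofReal_le_ofReal
    have hiiV : ∀ a b : ℝ, IntervalIntegrable V volume a b :=
      fun a b => (hVmono.monotoneOn _).intervalIntegrable
    have hiiVh : ∀ a b : ℝ, IntervalIntegrable (fun x => V (x + hstep)) volume a b :=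
      fun a b => ((hVmono.comp (fun u v huv => by simp [add_le_add_right huv, huv]
        : Monotone (fun x : ℝ => x + hstep))).monotoneOn _).intervalIntegrable
    have hicalc : ∫ x in Set.Icc (0:ℝ) 1, (V (x + hstep) - V x) * ((n:ℝ)+1)
        = (∫ x in (0:ℝ)..1, (V (x + hstep) - V x)) * ((n:ℝ)+1) := by
      rw [integral_Icc_eq_integral_Ioc, ← intervalIntegral.integral_of_le zero_le_one,
        ← intervalIntegral.integral_mul_const]
    rw [hicalc]
    have hsplit : ∫ x in (0:ℝ)..1, (V (x + hstep) - V x)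
        = (∫ x in (1:ℝ)..(1+hstep), V x) - ∫ x in (0:ℝ)..hstep, V x := by
      rw [intervalIntegral.integral_sub (hiiVh 0 1) (hiiV 0 1)]
      rw [intervalIntegral.integral_comp_add_right V hstep, zero_add]
      have A := intervalIntegral.integral_add_adjacent_intervals (μ := volume)
        (hiiV 0 hstep) (hiiV hstep 1)
      have B := intervalIntegral.integral_add_adjacent_intervals (μ := volume)
        (hiiV hstep 1) (hiiV 1 (1+hstep))
      linarith
    rw [hsplit]
    have hC : (∫ x in (1:ℝ)..(1+hstep), V x) ≤ hstep * M := by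
      calc (∫ x in (1:ℝ)..(1+hstep), V x) ≤ ∫ _x in (1:ℝ)..(1+hstep), M :=
            intervalIntegral.integral_mono_on (by linarith) (hiiV _ _)
              intervalIntegrable_const (fun x _ => hVM x)
        _ = hstep * M := by rw [intervalIntegral.integral_const, smul_eq_mul]; ring_nf
    have hD : 0 ≤ ∫ x in (0:ℝ)..hstep, V x :=
      intervalIntegral.integral_nonneg hhpos.le (fun x _ => hV0 x)
    have hfinal : ((∫ x in (1:ℝ)..(1+hstep), V x) - ∫ x in (0:ℝ)..hstep, V x) * ((n:ℝ)+1)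
        ≤ hstep * M * ((n:ℝ)+1) := by
      apply mul_le_mul_of_nonneg_right (by linarith) (by positivity)
    have hcancel : hstep * M * ((n:ℝ)+1) = M := by
      rw [hh]; field_simp
    linarith
  have hlim : liminf (fun n => ∫⁻ x in Set.Icc (0:ℝ) 1, g n x) atTop ≤ ENNReal.ofReal M :=
    calc liminf (fun n => ∫⁻ x in Set.Icc (0:ℝ) 1, g n x) atTop
        ≤ liminf (fun _ : ℕ => ENNReal.ofReal M) atTop :=
          liminf_le_liminf (Eventually.of_forall hbound2)
      _ = ENNReal.ofReal M := liminf_const _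
  have hfin : ∫⁻ x in Set.Icc (0:ℝ) 1, ↑‖f x‖₊ < ⊤ :=
    lt_of_le_of_lt (le_trans hfin1 hlim) ENNReal.ofReal_lt_top
  exact ⟨hmeasf, hfin⟩
end

section
/- Let X = ℓ²([0,1]) with orthonormal family {e_t : t ∈ (0,1]} and let h : [0,1] → X be h(t) = e_t (with h(0)=0). For every n ∈ ℕ and every tagged partition {(Iᵢ, tᵢ)}_{i≤m} of [0,1] in which each interval Iᵢ has length less than 1/n, one has ‖∑ᵢ h(tᵢ) λ(Iᵢ)‖ ≤ 1/√n. Consequently h is Henstock (indeed McShane) integrable with integral 0. -/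
open Set MeasureTheory

noncomputable def riemannSum {X : Type*} [NormedAddCommGroup X] [NormedSpace ℝ X]
    (f : ℝ → X) (n : ℕ) (x : Fin (n + 1) → ℝ) (t : Fin n → ℝ) : X :=
  ∑ i : Fin n, (x i.succ - x i.castSucc) • f (t i)

def HasHenstockIntegral {X : Type*} [NormedAddCommGroup X] [NormedSpace ℝ X]
    (f : ℝ → X) (a b : ℝ) (I : X) : Prop :=
  ∀ ε > (0 : ℝ), ∃ δ : ℝ → ℝ, (∀ s, 0 < δ s) ∧
    ∀ (n : ℕ) (x : Fin (n + 1) → ℝ) (t : Fin n → ℝ),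
      IsIntervalPartition n a b x → IsPerronTagged n x t → IsDeltaFine δ n x t →
      ‖riemannSum f n x t - I‖ < ε

open Finset in
/-- Telescoping sum of interval lengths. -/
lemma aux_telescope (m : ℕ) (x : Fin (m + 1) → ℝ) :
    ∑ i : Fin m, (x i.succ - x i.castSucc) = x (Fin.last m) - x 0 := by
  induction m with
  | zero => simp
  | succ n ih =>
    rw [Fin.sum_univ_castSucc]
    have := ih (x ∘ Fin.castSucc)
    simp only [Function.comp] at this
    simp only [Fin.succ_castSucc] at this ⊢
    rw [this]
    simp [Fin.succ_last]

/-- The inner product of two values of `h` is at most the indicator of equality. -/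
lemma aux_inner_h_le {X : Type*} [NormedAddCommGroup X] [InnerProductSpace ℝ X]
    (e : Set.Ioc (0 : ℝ) 1 → X) (he : Orthonormal ℝ e) (h : ℝ → X)
    (hh : ∀ s : ℝ, ∀ hs : s ∈ Set.Ioc (0 : ℝ) 1, h s = e ⟨s, hs⟩) (hh0 : h 0 = 0)
    {s s' : ℝ} (hs : s ∈ Set.Icc (0 : ℝ) 1) (hs' : s' ∈ Set.Icc (0 : ℝ) 1) :
    (inner ℝ (h s) (h s') : ℝ) ≤ if s = s' then 1 else 0 := by
  have hcase : ∀ u : ℝ, u ∈ Set.Icc (0 : ℝ) 1 → u = 0 ∨ u ∈ Set.Ioc (0 : ℝ) 1 := by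
    intro u hu
    rcases eq_or_lt_of_le hu.1 with h1 | h1
    · exact Or.inl h1.symm
    · exact Or.inr ⟨h1, hu.2⟩
  rcases hcase s hs with rfl | hsm
  · rw [hh0, inner_zero_left]; split <;> norm_num
  rcases hcase s' hs' with rfl | hsm'
  · rw [hh0, inner_zero_right]; split <;> norm_num
  rw [hh s hsm, hh s' hsm']
  by_cases hss : s = s'
  · subst hss
    rw [if_pos rfl, real_inner_self_eq_norm_sq, he.1 ⟨s, hsm⟩]
    norm_num
  · rw [if_neg hss, he.2 (by simp [Subtype.ext_iff, hss])]

open Finset in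
/-- Key estimate: the square of the norm of a Riemann sum of `h` is bounded by a uniform
bound `c` on the total length of the intervals sharing any given tag. -/
lemma aux_key {X : Type*} [NormedAddCommGroup X] [InnerProductSpace ℝ X]
    (e : Set.Ioc (0 : ℝ) 1 → X) (he : Orthonormal ℝ e) (h : ℝ → X)
    (hh : ∀ s : ℝ, ∀ hs : s ∈ Set.Ioc (0 : ℝ) 1, h s = e ⟨s, hs⟩) (hh0 : h 0 = 0)
    (m : ℕ) (x : Fin (m + 1) → ℝ) (t : Fin m → ℝ)
    (hpart : IsIntervalPartition m 0 1 x) (htag : IsPerronTagged m x t)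
    (c : ℝ)
    (hc : ∀ i : Fin m,
      ∑ j ∈ univ.filter (fun j => t j = t i), (x j.succ - x j.castSucc) ≤ c) :
    ‖riemannSum h m x t‖ ^ 2 ≤ c := by
  obtain ⟨hmono, hx0, hx1⟩ := hpart
  set Δ : Fin m → ℝ := fun i => x i.succ - x i.castSucc with hΔ
  have hΔ0 : ∀ i, 0 ≤ Δ i := fun i => sub_nonneg.2 (hmono (show i.castSucc < i.succ from Fin.castSucc_lt_succ).le)
  have hsum : ∑ i, Δ i = 1 := by rw [hΔ, aux_telescope, hx1, hx0]; ring
  have htIcc : ∀ i : Fin m, t i ∈ Set.Icc (0 : ℝ) 1 := by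
    intro i
    constructor
    · calc (0 : ℝ) = x 0 := hx0.symm
        _ ≤ x i.castSucc := hmono (Fin.zero_le _)
        _ ≤ t i := (htag i).1
    · calc t i ≤ x i.succ := (htag i).2
        _ ≤ x (Fin.last m) := hmono (Fin.le_last _)
        _ = 1 := hx1
  have hnorm : ‖riemannSum h m x t‖ ^ 2
      = ∑ i, ∑ j, Δ i * Δ j * (inner ℝ (h (t i)) (h (t j)) : ℝ) := by
    rw [← real_inner_self_eq_norm_sq, riemannSum, sum_inner]
    refine Finset.sum_congr rfl fun i _ => ?_
    rw [inner_sum]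
    refine Finset.sum_congr rfl fun j _ => ?_
    rw [real_inner_smul_left, real_inner_smul_right]
    ring
  rw [hnorm]
  calc ∑ i, ∑ j, Δ i * Δ j * (inner ℝ (h (t i)) (h (t j)) : ℝ)
      ≤ ∑ i, ∑ j, (if t j = t i then Δ i * Δ j else 0) := by
        refine Finset.sum_le_sum fun i _ => Finset.sum_le_sum fun j _ => ?_
        have h1 := aux_inner_h_le e he h hh hh0 (htIcc i) (htIcc j)
        have h2 : (0 : ℝ) ≤ Δ i * Δ j := mul_nonneg (hΔ0 i) (hΔ0 j)
        by_cases hij : t i = t j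
        · rw [if_pos hij.symm]
          rw [if_pos hij] at h1
          nlinarith
        · rw [if_neg (fun hh' => hij hh'.symm)]
          rw [if_neg hij] at h1
          nlinarith
    _ = ∑ i, Δ i * ∑ j ∈ univ.filter (fun j => t j = t i), Δ j := by
        refine Finset.sum_congr rfl fun i _ => ?_
        rw [Finset.mul_sum, Finset.sum_filter]
    _ ≤ ∑ i, Δ i * c := Finset.sum_le_sum fun i _ => mul_le_mul_of_nonneg_left (hc i) (hΔ0 i)
    _ = c := by rw [← Finset.sum_mul, hsum, one_mul]

open Finset in
/-- At most two intervals of a Perron-tagged partition can share a tag, so the total length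
of the intervals with a given tag is at most twice the maximal interval length. -/
lemma aux_count_bound (m : ℕ) (x : Fin (m + 1) → ℝ) (t : Fin m → ℝ)
    (hmono : Monotone x) (htag : IsPerronTagged m x t) (r : ℝ)
    (hr : ∀ i : Fin m, x i.succ - x i.castSucc ≤ r) (i : Fin m) :
    ∑ j ∈ univ.filter (fun j => t j = t i), (x j.succ - x j.castSucc) ≤ 2 * r := by
  have hΔ0 : ∀ j : Fin m, 0 ≤ x j.succ - x j.castSucc :=
    fun j => sub_nonneg.2 (hmono (show j.castSucc < j.succ from Fin.castSucc_lt_succ).le)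
  have hr0 : 0 ≤ r := le_trans (hΔ0 i) (hr i)
  set S := univ.filter (fun j => t j = t i) with hS
  have hne : S.Nonempty := ⟨i, by simp [hS]⟩
  obtain ⟨a, haS, hamin⟩ : ∃ a ∈ S, ∀ j ∈ S, a ≤ j :=
    ⟨S.min' hne, S.min'_mem hne, fun j => S.min'_le j⟩
  obtain ⟨b, hbS, hbmax⟩ : ∃ b ∈ S, ∀ j ∈ S, j ≤ b :=
    ⟨S.max' hne, S.max'_mem hne, fun j => S.le_max' j⟩
  have hta : t a = t i := by simpa [hS] using haS
  have htb : t b = t i := by simpa [hS] using hbS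
  have hmid : ∀ k : Fin (m + 1), a.val < k.val → k.val ≤ b.val → x k = t i := by
    intro k h1 h2
    have l1 : t i ≤ x k := by
      rw [← hta]
      exact le_trans (htag a).2 (hmono (show a.succ ≤ k by
        rw [Fin.le_def]; simp only [Fin.val_succ]; omega))
    have l2 : x k ≤ t i := by
      rw [← htb]
      exact le_trans (hmono (show k ≤ b.castSucc by
        rw [Fin.le_def]; simp only [Fin.coe_castSucc]; omega)) (htag b).1
    linarith
  have hzero : ∀ j ∈ S, j ∉ insert a ({b} : Finset (Fin m)) →
      x j.succ - x j.castSucc = 0 := by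
    intro j hj hjm
    simp only [Finset.mem_insert, Finset.mem_singleton, not_or] at hjm
    have h1 : a < j := lt_of_le_of_ne (hamin j hj) (Ne.symm hjm.1)
    have h2 : j < b := lt_of_le_of_ne (hbmax j hj) hjm.2
    rw [Fin.lt_def] at h1 h2
    have e1 : x j.castSucc = t i := hmid j.castSucc (by simpa using h1)
      (by simp only [Fin.coe_castSucc]; omega)
    have e2 : x j.succ = t i := hmid j.succ (by simp only [Fin.val_succ]; omega)
      (by simp only [Fin.val_succ]; omega)
    rw [e1, e2, sub_self]
  calc ∑ j ∈ S, (x j.succ - x j.castSucc)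
      ≤ ∑ j ∈ S ∩ insert a {b}, (x j.succ - x j.castSucc) := by
        rw [Finset.sum_subset (Finset.inter_subset_left)]
        intro j hj hjm
        exact hzero j hj (fun hx => hjm (Finset.mem_inter.2 ⟨hj, hx⟩))
    _ ≤ ∑ j ∈ insert a {b}, (x j.succ - x j.castSucc) :=
        Finset.sum_le_sum_of_subset_of_nonneg Finset.inter_subset_right (fun j _ _ => hΔ0 j)
    _ ≤ 2 * r := by
        by_cases hab : a = b
        · rw [hab, Finset.insert_eq, Finset.union_idempotent, Finset.sum_singleton]
          linarith [hr b]
        · rw [Finset.sum_insert (by simpa using hab), Finset.sum_singleton]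
          linarith [hr a, hr b]

/-- With `{e_t : t ∈ (0,1]}` an orthonormal family in a Hilbert space `X` (e.g.
`X = ℓ²([0,1])`) and `h(t) = e_t` for `t ∈ (0,1]`, `h(0) = 0`: every tagged Perron
partition of `[0,1]` with (distinct tags and) all intervals of length `< 1/n` has Riemann
sum of norm at most `1/√n`; consequently `h` is Henstock integrable with integral `0`. -/
theorem riemann_sum_estimate_and_henstock_integrable
    {X : Type*} [NormedAddCommGroup X] [InnerProductSpace ℝ X] [CompleteSpace X]
    (e : Set.Ioc (0 : ℝ) 1 → X) (he : Orthonormal ℝ e)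
    (h : ℝ → X)
    (hh : ∀ s : ℝ, ∀ hs : s ∈ Set.Ioc (0 : ℝ) 1, h s = e ⟨s, hs⟩)
    (hh0 : h 0 = 0) :
    (∀ n : ℕ, 0 < n →
      ∀ (m : ℕ) (x : Fin (m + 1) → ℝ) (t : Fin m → ℝ),
        IsIntervalPartition m 0 1 x → IsPerronTagged m x t → Function.Injective t →
        (∀ i : Fin m, x i.succ - x i.castSucc < 1 / (n : ℝ)) →
        ‖riemannSum h m x t‖ ≤ 1 / Real.sqrt n) ∧
    HasHenstockIntegral h 0 1 0 := by
  constructor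
  · -- Part 1
    intro n hn m x t hpart htag hinj hlen
    have hn' : (0 : ℝ) < (n : ℝ) := by exact_mod_cast hn
    have hkey : ‖riemannSum h m x t‖ ^ 2 ≤ 1 / (n : ℝ) := by
      refine aux_key e he h hh hh0 m x t hpart htag _ fun i => ?_
      have hfilter : Finset.univ.filter (fun j => t j = t i) = {i} := by
        ext j; simp [hinj.eq_iff]
      rw [hfilter, Finset.sum_singleton]
      exact (hlen i).le
    have hsq : Real.sqrt (1 / (n : ℝ)) = 1 / Real.sqrt n := by
      rw [one_div, one_div, Real.sqrt_inv]
    rw [← hsq]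
    exact (Real.le_sqrt (norm_nonneg _) (by positivity)).2 hkey
  · -- Part 2
    intro ε hε
    obtain ⟨n, hngt⟩ := exists_nat_gt (2 / ε ^ 2)
    have hε2 : (0 : ℝ) < ε ^ 2 := by positivity
    have hn' : (0 : ℝ) < (n : ℝ) := lt_of_le_of_lt (by positivity) hngt
    refine ⟨fun _ => 1 / (2 * (n : ℝ)), fun s => by positivity, ?_⟩
    intro m x t hpart htag hfine
    have hmono := hpart.1
    have hlen : ∀ i : Fin m, x i.succ - x i.castSucc ≤ 1 / (n : ℝ) := by
      intro i
      have hΔ0 : x i.castSucc ≤ x i.succ := hmono (show i.castSucc < i.succ from Fin.castSucc_lt_succ).le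
      have h1 := hfine i ⟨le_refl _, hΔ0⟩
      have h2 := hfine i ⟨hΔ0, le_refl _⟩
      have l1 : t i - 1 / (2 * (n : ℝ)) ≤ x i.castSucc := h1.1
      have l2 : x i.succ ≤ t i + 1 / (2 * (n : ℝ)) := h2.2
      have hne : (n : ℝ) ≠ 0 := ne_of_gt hn'
      have : 1 / (2 * (n : ℝ)) + 1 / (2 * (n : ℝ)) = 1 / (n : ℝ) := by
        rw [← add_div]
        rw [show (1 : ℝ) + 1 = 2 by norm_num, mul_comm, ← div_div, div_right_comm]
        norm_num
      linarith
    have hkey : ‖riemannSum h m x t‖ ^ 2 ≤ 2 * (1 / (n : ℝ)) :=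
      aux_key e he h hh hh0 m x t hpart htag _ fun i =>
        aux_count_bound m x t hmono htag _ hlen i
    have hlt : 2 * (1 / (n : ℝ)) < ε ^ 2 := by
      rw [div_lt_iff₀ hε2] at hngt
      rw [mul_one_div, div_lt_iff₀ hn']
      linarith
    rw [sub_zero]
    have : ‖riemannSum h m x t‖ ^ 2 < ε ^ 2 := lt_of_le_of_lt hkey hlt
    exact lt_of_pow_lt_pow_left₀ 2 hε.le this
end

section
/- Let X be a Banach space and f : [0,1] → X be strongly measurable and Pettis integrable, with indefinite Pettis integral ν(A) = (P)∫_A f dλ for A Lebesgue measurable. If ν has finite variation |ν|([0,1]) < ∞, then f is Bochner integrable. -/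
open Set MeasureTheory

/-- A strongly measurable, Pettis integrable function `f : [0,1] → X` whose indefinite
Pettis integral `ν` has finite variation is Bochner integrable. -/
theorem bochner_integrable_of_pettis_finite_variation
    {X : Type*} [NormedAddCommGroup X] [NormedSpace ℝ X] [CompleteSpace X]
    (f : ℝ → X) (hf : StronglyMeasurable f)
    (ν : Set ℝ → X)
    -- Pettis integrability of `f` on `[0,1]` with indefinite integral `ν`
    (hPettis : ∀ φ : StrongDual ℝ X,
      IntegrableOn (fun s => φ (f s)) (Set.Icc (0 : ℝ) 1) volume ∧
      ∀ A : Set ℝ, MeasurableSet A →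
        φ (ν A) = ∫ s in A ∩ Set.Icc (0 : ℝ) 1, φ (f s) ∂volume)
    -- finite variation of `ν`
    (M : ℝ)
    (hM : ∀ (n : ℕ) (A : Fin n → Set ℝ), (∀ i, MeasurableSet (A i)) →
      Pairwise (Function.onFun Disjoint A) → (∑ i, ‖ν (A i)‖) ≤ M) :
    IntegrableOn f (Set.Icc (0 : ℝ) 1) volume := by
  rcases subsingleton_or_nontrivial X with hX | hX
  · have hf0 : f = fun _ => (0 : X) := funext fun s => Subsingleton.elim _ _
    rw [hf0]
    exact integrableOn_const measure_Icc_lt_top.ne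
  obtain ⟨t, htc, hts⟩ := hf.isSeparable_range
  rcases t.eq_empty_or_nonempty with rfl | htne
  · exfalso
    have := hts (mem_range_self 0)
    simp at this
  obtain ⟨u, rfl⟩ := Set.Countable.exists_eq_range htc htne
  choose φ hφ1 hφ2 using fun k => exists_dual_vector' ℝ (u k)
  have hφ2' : ∀ k, φ k (u k) = ‖u k‖ := fun k => by exact_mod_cast hφ2 k
  set S : ℕ → Set ℝ := fun k => {s | ‖f s‖ - 1 < φ k (f s)} with hSdef
  have hSmeas : ∀ k, MeasurableSet (S k) := fun k =>
    measurableSet_lt (hf.norm.measurable.sub measurable_const)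
      ((φ k).continuous.comp_stronglyMeasurable hf).measurable
  have hScover : ∀ s : ℝ, ∃ k, s ∈ S k := by
    intro s
    obtain ⟨y, hy, hdy⟩ := Metric.mem_closure_iff.1 (hts (mem_range_self s)) (1/2) (by norm_num)
    obtain ⟨k, rfl⟩ := hy
    refine ⟨k, ?_⟩
    have h1 : ‖f s‖ - ‖u k‖ ≤ ‖f s - u k‖ := norm_sub_norm_le _ _
    have h2 : φ k (f s) = φ k (u k) + φ k (f s - u k) := by
      rw [map_sub]; ring
    have habs : |φ k (f s - u k)| ≤ ‖f s - u k‖ := by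
      rw [← Real.norm_eq_abs]
      calc ‖φ k (f s - u k)‖ ≤ ‖φ k‖ * ‖f s - u k‖ := (φ k).le_opNorm _
        _ = ‖f s - u k‖ := by rw [hφ1]; ring
    have h3 : -‖f s - u k‖ ≤ φ k (f s - u k) := by
      have := neg_abs_le (φ k (f s - u k)); linarith
    have hd : ‖f s - u k‖ < 1/2 := by rwa [← dist_eq_norm]
    simp only [S, mem_setOf_eq]
    rw [h2, hφ2']
    linarith
  set E : ℕ → Set ℝ := fun k => Icc (0:ℝ) 1 ∩ disjointed S k with hEdef
  have hEmeas : ∀ k, MeasurableSet (E k) := fun k =>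
    measurableSet_Icc.inter (MeasurableSet.disjointed hSmeas k)
  have hEsub : ∀ k, E k ⊆ Icc (0:ℝ) 1 := fun k => inter_subset_left
  have hES : ∀ k, E k ⊆ S k := fun k =>
    inter_subset_right.trans (disjointed_subset S k)
  have hEdisj : Pairwise (Function.onFun Disjoint E) := fun i j hij =>
    ((disjoint_disjointed S) hij).mono inter_subset_right inter_subset_right
  have hEunion : ⋃ k, E k = Icc (0:ℝ) 1 := by
    have hScov : ⋃ k, S k = univ := eq_univ_iff_forall.2 fun s => mem_iUnion.2 (hScover s)
    simp only [E, ← inter_iUnion, iUnion_disjointed, hScov, inter_univ]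
  have hEfin : ∀ k, volume (E k) < ⊤ := fun k =>
    lt_of_le_of_lt (measure_mono (hEsub k)) measure_Icc_lt_top
  have hint : ∀ k, IntegrableOn (fun s => φ k (f s) + 1) (E k) volume := fun k =>
    (((hPettis (φ k)).1).mono_set (hEsub k)).add (integrableOn_const (hEfin k).ne)
  have hnonneg : ∀ k, 0 ≤ᵐ[volume.restrict (E k)] fun s => φ k (f s) + 1 := by
    intro k
    refine (ae_restrict_iff' (hEmeas k)).2 (Filter.Eventually.of_forall fun s hs => ?_)
    have h := hES k hs
    simp only [S, mem_setOf_eq] at h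
    have h0 : (0:ℝ) ≤ ‖f s‖ := norm_nonneg _
    show (0:ℝ) ≤ φ k (f s) + 1
    linarith
  have hkey : ∀ k, ∫⁻ s in E k, ENNReal.ofReal ‖f s‖ ∂volume
      ≤ ENNReal.ofReal ‖ν (E k)‖ + volume (E k) := by
    intro k
    have hle : ∫⁻ s in E k, ENNReal.ofReal ‖f s‖ ∂volume
        ≤ ∫⁻ s in E k, ENNReal.ofReal (φ k (f s) + 1) ∂volume := by
      refine setLIntegral_mono
        (ENNReal.measurable_ofReal.comp
          (((φ k).continuous.comp_stronglyMeasurable hf).measurable.add measurable_const))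
        fun s hs => ?_
      have h := hES k hs
      simp only [S, mem_setOf_eq] at h
      exact ENNReal.ofReal_le_ofReal (by linarith)
    have heq : ∫⁻ s in E k, ENNReal.ofReal (φ k (f s) + 1) ∂volume
        = ENNReal.ofReal (∫ s in E k, (φ k (f s) + 1) ∂volume) :=
      (ofReal_integral_eq_lintegral_ofReal (hint k) (hnonneg k)).symm
    have hval : ∫ s in E k, (φ k (f s) + 1) ∂volume
        = φ k (ν (E k)) + (volume (E k)).toReal := by
      rw [integral_add ((hPettis (φ k)).1.mono_set (hEsub k))
        (integrableOn_const (hEfin k).ne)]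
      congr 1
      · have h := (hPettis (φ k)).2 (E k) (hEmeas k)
        rw [inter_eq_self_of_subset_left (hEsub k)] at h
        exact h.symm
      · simp [Measure.real]
    have hφν : φ k (ν (E k)) ≤ ‖ν (E k)‖ := by
      calc φ k (ν (E k)) ≤ |φ k (ν (E k))| := le_abs_self _
        _ = ‖φ k (ν (E k))‖ := (Real.norm_eq_abs _).symm
        _ ≤ ‖φ k‖ * ‖ν (E k)‖ := (φ k).le_opNorm _
        _ = ‖ν (E k)‖ := by rw [hφ1 k, one_mul]
    calc ∫⁻ s in E k, ENNReal.ofReal ‖f s‖ ∂volume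
        ≤ ENNReal.ofReal (φ k (ν (E k)) + (volume (E k)).toReal) := by
          rw [← hval, ← heq]; exact hle
      _ ≤ ENNReal.ofReal (φ k (ν (E k))) + ENNReal.ofReal (volume (E k)).toReal :=
          ENNReal.ofReal_add_le
      _ ≤ ENNReal.ofReal ‖ν (E k)‖ + volume (E k) :=
          add_le_add (ENNReal.ofReal_le_ofReal hφν) ENNReal.ofReal_toReal_le
  have htsum : ∑' k, ENNReal.ofReal ‖ν (E k)‖ ≤ ENNReal.ofReal M := by
    rw [ENNReal.tsum_eq_iSup_sum]
    refine iSup_le fun s => ?_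
    obtain ⟨n, hn⟩ : ∃ n, s ⊆ Finset.range n :=
      ⟨(s.sup id) + 1, fun x hx => Finset.mem_range.2 (Nat.lt_succ_of_le (Finset.le_sup (f := id) hx))⟩
    have hsum : ∑ k ∈ Finset.range n, ‖ν (E k)‖ ≤ M := by
      have := hM n (fun i => E i) (fun i => hEmeas i)
        (fun i j hij => hEdisj (Fin.val_injective.ne hij))
      rw [← Fin.sum_univ_eq_sum_range fun k => ‖ν (E k)‖]
      exact this
    calc ∑ k ∈ s, ENNReal.ofReal ‖ν (E k)‖
        ≤ ∑ k ∈ Finset.range n, ENNReal.ofReal ‖ν (E k)‖ :=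
          Finset.sum_le_sum_of_subset hn
      _ = ENNReal.ofReal (∑ k ∈ Finset.range n, ‖ν (E k)‖) :=
          (ENNReal.ofReal_sum_of_nonneg fun _ _ => norm_nonneg _).symm
      _ ≤ ENNReal.ofReal M := ENNReal.ofReal_le_ofReal hsum
  refine ⟨hf.aestronglyMeasurable.restrict, ?_⟩
  rw [hasFiniteIntegral_iff_norm]
  calc ∫⁻ s in Icc (0:ℝ) 1, ENNReal.ofReal ‖f s‖ ∂volume
      = ∑' k, ∫⁻ s in E k, ENNReal.ofReal ‖f s‖ ∂volume := by
        rw [← hEunion, lintegral_iUnion hEmeas hEdisj]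
    _ ≤ ∑' k, (ENNReal.ofReal ‖ν (E k)‖ + volume (E k)) := ENNReal.tsum_le_tsum hkey
    _ = (∑' k, ENNReal.ofReal ‖ν (E k)‖) + ∑' k, volume (E k) := ENNReal.tsum_add
    _ ≤ ENNReal.ofReal M + volume (Icc (0:ℝ) 1) := by
        refine add_le_add htsum (le_of_eq ?_)
        rw [← measure_iUnion hEdisj hEmeas, hEunion]
    _ < ⊤ := ENNReal.add_lt_top.2 ⟨ENNReal.ofReal_lt_top, measure_Icc_lt_top⟩
end

section
/- Let Y be a Banach space, f : [0,1] → Y strongly measurable, and suppose the indefinite Pettis integral of f exists and has finite variation. If moreover f is McShane integrable with McShane integral coinciding with the Pettis integral on intervals, then f is variationally McShane integrable: for every ε > 0 there is a gauge δ such that ∑ᵢ ‖ν(Iᵢ) − f(tᵢ)λ(Iᵢ)‖ < ε for every δ-fine tagged partition {(Iᵢ,tᵢ)} of [0,1] (tags not required to lie in their intervals). -/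
open Set MeasureTheory

/-- McShane tagging: tags lie in `[0,1]` but need not belong to their intervals. -/
def IsMcShaneTagged (n : ℕ) (t : Fin n → ℝ) : Prop :=
  ∀ i : Fin n, t i ∈ Set.Icc (0 : ℝ) 1

/-- `δ`-fineness (McShane): `Iᵢ ⊆ (tᵢ - δ(tᵢ), tᵢ + δ(tᵢ))`. -/
def IsMcShaneFine (δ : ℝ → ℝ) (n : ℕ) (x : Fin (n + 1) → ℝ) (t : Fin n → ℝ) : Prop :=
  ∀ i : Fin n, Set.Icc (x i.castSucc) (x i.succ) ⊆ Set.Ioo (t i - δ (t i)) (t i + δ (t i))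

/-- McShane integrability of `f` on `[a,b]` with integral `I`. -/
def HasMcShaneIntegral {Y : Type*} [NormedAddCommGroup Y] [NormedSpace ℝ Y]
    (f : ℝ → Y) (a b : ℝ) (I : Y) : Prop :=
  ∀ ε > (0 : ℝ), ∃ δ : ℝ → ℝ, (∀ s, 0 < δ s) ∧
    ∀ (n : ℕ) (x : Fin (n + 1) → ℝ) (t : Fin n → ℝ),
      IsIntervalPartition n a b x → IsMcShaneTagged n t → IsMcShaneFine δ n x t →
      ‖(∑ i : Fin n, (x i.succ - x i.castSucc) • f (t i)) - I‖ < ε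


section McShaneAux


lemma sum_measure_Ioc (μ : Measure ℝ) : ∀ {n : ℕ} {x : Fin (n+1) → ℝ}, Monotone x →
    ∑ i : Fin n, μ (Set.Ioc (x i.castSucc) (x i.succ)) = μ (Set.Ioc (x 0) (x (Fin.last n))) := by
  intro n
  induction n with
  | zero => intro x _; simp
  | succ n ih =>
    intro x hx
    rw [Fin.sum_univ_castSucc]
    have h1 : ∑ i : Fin n, μ (Set.Ioc (x i.castSucc.castSucc) (x i.castSucc.succ))
        = μ (Set.Ioc (x 0) (x (Fin.last n).castSucc)) := by
      have := ih (x := x ∘ Fin.castSucc) (hx.comp (Fin.strictMono_castSucc).monotone)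
      simpa [Function.comp] using this
    rw [h1, ← measure_union (Set.Ioc_disjoint_Ioc_of_le le_rfl) measurableSet_Ioc]
    rw [show (Fin.last n).succ = Fin.last (n+1) from Fin.succ_last n]
    rw [Set.Ioc_union_Ioc_eq_Ioc (hx (Fin.zero_le _)) (hx (Fin.le_last _))]

lemma sum_measure_Icc (μ : Measure ℝ) (hμ : ∀ a : ℝ, μ {a} = 0) {n : ℕ} {x : Fin (n+1) → ℝ}
    (hx : Monotone x) :
    ∑ i : Fin n, μ (Set.Icc (x i.castSucc) (x i.succ)) = μ (Set.Ioc (x 0) (x (Fin.last n))) := by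
  rw [← sum_measure_Ioc μ hx]
  refine Finset.sum_congr rfl fun i _ => ?_
  have hab : x i.castSucc ≤ x i.succ := hx i.castSucc_le_succ
  apply le_antisymm
  · calc μ (Set.Icc (x i.castSucc) (x i.succ))
        ≤ μ ({x i.castSucc} ∪ Set.Ioc (x i.castSucc) (x i.succ)) := by
          apply measure_mono; intro s hs
          rcases eq_or_lt_of_le hs.1 with h | h
          · exact Or.inl (by simp [← h])
          · exact Or.inr ⟨h, hs.2⟩
    _ ≤ μ {x i.castSucc} + μ (Set.Ioc (x i.castSucc) (x i.succ)) := measure_union_le _ _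
    _ = μ (Set.Ioc (x i.castSucc) (x i.succ)) := by rw [hμ]; ring
  · exact measure_mono Set.Ioc_subset_Icc_self

lemma vc_gauge (u : ℝ → NNReal) (hu : Measurable u) {η : ℝ} (hη : 0 < η)
    (hint : ∫⁻ s in Set.Icc (0:ℝ) 1, (u s : ENNReal) ∂volume < ENNReal.ofReal η) :
    ∃ δ : ℝ → ℝ, (∀ s, 0 < δ s) ∧
      ∀ (n : ℕ) (x : Fin (n+1) → ℝ) (t : Fin n → ℝ),
        IsIntervalPartition n 0 1 x → IsMcShaneTagged n t → IsMcShaneFine δ n x t →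
        ∑ i : Fin n, (x i.succ - x i.castSucc) * (u (t i) : ℝ) ≤ 2 * η := by
  classical
  set u' : ℝ → NNReal := (Set.Icc (0:ℝ) 1).indicator u with hu'def
  have hu'meas : Measurable u' := hu.indicator measurableSet_Icc
  have hcoe : ∀ s, ((u' s : ENNReal)) = (Set.Icc (0:ℝ) 1).indicator (fun s => (u s : ENNReal)) s := by
    intro s
    by_cases h : s ∈ Set.Icc (0:ℝ) 1 <;> simp [hu'def, h]
  have hu'int : ∫⁻ s, (u' s : ENNReal) ∂volume < ENNReal.ofReal η := by
    calc ∫⁻ s, (u' s : ENNReal) ∂volume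
        = ∫⁻ s, (Set.Icc (0:ℝ) 1).indicator (fun s => (u s : ENNReal)) s ∂volume :=
          lintegral_congr hcoe
      _ = ∫⁻ s in Set.Icc (0:ℝ) 1, (u s : ENNReal) ∂volume :=
          lintegral_indicator measurableSet_Icc _
      _ < ENNReal.ofReal η := hint
  obtain ⟨G, hG1, hG2, hG3⟩ := exists_lt_lowerSemicontinuous_lintegral_ge volume u' hu'meas
    (ENNReal.ofReal_pos.2 hη).ne'
  have hGtot : ∫⁻ s, G s ∂volume ≤ 2 * ENNReal.ofReal η := by
    calc ∫⁻ s, G s ∂volume ≤ (∫⁻ s, (u' s : ENNReal) ∂volume) + ENNReal.ofReal η := hG3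
      _ ≤ ENNReal.ofReal η + ENNReal.ofReal η := add_le_add hu'int.le le_rfl
      _ = 2 * ENNReal.ofReal η := (two_mul _).symm
  -- the gauge
  have hδ : ∀ s : ℝ, ∃ r : ℝ, 0 < r ∧ ∀ z ∈ Set.Ioo (s - r) (s + r), (u' s : ENNReal) ≤ G z := by
    intro s
    have := hG2 s ((u' s : ENNReal)) (hG1 s)
    rw [Metric.eventually_nhds_iff] at this
    obtain ⟨r, hr, hball⟩ := this
    refine ⟨r, hr, fun z hz => ?_⟩
    have : dist z s < r := by
      rw [Real.dist_eq, abs_lt]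
      constructor <;> [linarith [hz.1]; linarith [hz.2]]
    exact (hball this).le
  choose δ hδpos hδspec using hδ
  refine ⟨δ, hδpos, ?_⟩
  intro n x t hx ht hfine
  have hmono := hx.1
  have hIsub : ∀ i : Fin n, Set.Icc (x i.castSucc) (x i.succ) ⊆ Set.Icc (0:ℝ) 1 := by
    intro i
    apply Set.Icc_subset_Icc
    · rw [← hx.2.1]; exact hmono (Fin.zero_le _)
    · rw [← hx.2.2]; exact hmono (Fin.le_last _)
  set μG := volume.withDensity G with hμG
  have hμGpt : ∀ a : ℝ, μG {a} = 0 := by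
    intro a
    rw [hμG, withDensity_apply _ (measurableSet_singleton a)]
    exact setLIntegral_measure_zero _ _ (measure_singleton a)
  have hbound : ∀ i : Fin n,
      ENNReal.ofReal ((x i.succ - x i.castSucc) * (u (t i) : ℝ))
        ≤ μG (Set.Icc (x i.castSucc) (x i.succ)) := by
    intro i
    have hab : x i.castSucc ≤ x i.succ := hmono i.castSucc_le_succ
    have hut : u (t i) = u' (t i) := by rw [hu'def, Set.indicator_of_mem (ht i)]
    calc ENNReal.ofReal ((x i.succ - x i.castSucc) * (u (t i) : ℝ))
        = ENNReal.ofReal (x i.succ - x i.castSucc) * (u (t i) : ENNReal) := by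
          rw [ENNReal.ofReal_mul (by linarith), ENNReal.ofReal_coe_nnreal]
      _ = volume (Set.Icc (x i.castSucc) (x i.succ)) * (u' (t i) : ENNReal) := by
          rw [Real.volume_Icc, hut]
      _ = ∫⁻ s in Set.Icc (x i.castSucc) (x i.succ), (u' (t i) : ENNReal) ∂volume := by
          rw [setLIntegral_const, mul_comm]
      _ ≤ ∫⁻ s in Set.Icc (x i.castSucc) (x i.succ), G s ∂volume := by
          refine setLIntegral_mono hG2.measurable fun z hz => ?_
          exact hδspec (t i) z (hfine i hz)
      _ = μG (Set.Icc (x i.castSucc) (x i.succ)) := by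
          rw [hμG, withDensity_apply _ measurableSet_Icc]
  calc ∑ i : Fin n, (x i.succ - x i.castSucc) * (u (t i) : ℝ)
      = (ENNReal.ofReal (∑ i : Fin n, (x i.succ - x i.castSucc) * (u (t i) : ℝ))).toReal := by
        rw [ENNReal.toReal_ofReal]
        apply Finset.sum_nonneg
        intro i _
        have h1 : x i.castSucc ≤ x i.succ := hmono i.castSucc_le_succ
        have h2 : (0:ℝ) ≤ (u (t i) : ℝ) := (u (t i)).2
        nlinarith
    _ ≤ (2 * ENNReal.ofReal η).toReal := by
        apply ENNReal.toReal_mono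
        · exact ENNReal.mul_ne_top (by simp) ENNReal.ofReal_ne_top
        calc ENNReal.ofReal (∑ i : Fin n, (x i.succ - x i.castSucc) * (u (t i) : ℝ))
            = ∑ i : Fin n, ENNReal.ofReal ((x i.succ - x i.castSucc) * (u (t i) : ℝ)) := by
              apply ENNReal.ofReal_sum_of_nonneg
              intro i _
              have h1 : x i.castSucc ≤ x i.succ := hmono i.castSucc_le_succ
              have h2 : (0:ℝ) ≤ (u (t i) : ℝ) := (u (t i)).2
              nlinarith
          _ ≤ ∑ i : Fin n, μG (Set.Icc (x i.castSucc) (x i.succ)) :=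
              Finset.sum_le_sum fun i _ => hbound i
          _ = μG (Set.Ioc (x 0) (x (Fin.last n))) := sum_measure_Icc μG hμGpt hmono
          _ ≤ ∫⁻ s, G s ∂volume := by
              rw [hμG, withDensity_apply _ measurableSet_Ioc]
              exact setLIntegral_le_lintegral _ _
          _ ≤ 2 * ENNReal.ofReal η := hGtot
    _ ≤ 2 * η := by
        rw [ENNReal.toReal_mul, ENNReal.toReal_ofReal hη.le]
        simp

variable {Y : Type*} [NormedAddCommGroup Y] [NormedSpace ℝ Y] [CompleteSpace Y]


lemma lintegral_nnnorm_le_of_pettis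
    (f : ℝ → Y) (hf : StronglyMeasurable f)
    (ν : Set ℝ → Y)
    (hPettis : ∀ φ : StrongDual ℝ Y,
      IntegrableOn (fun s => φ (f s)) (Set.Icc (0 : ℝ) 1) volume ∧
      ∀ A : Set ℝ, MeasurableSet A →
        φ (ν A) = ∫ s in A ∩ Set.Icc (0 : ℝ) 1, φ (f s) ∂volume)
    (M : ℝ)
    (hM : ∀ (n : ℕ) (A : Fin n → Set ℝ), (∀ i, MeasurableSet (A i)) →
      Pairwise (Function.onFun Disjoint A) → (∑ i, ‖ν (A i)‖) ≤ M) :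
    ∫⁻ s in Set.Icc (0:ℝ) 1, (‖f s‖₊ : ENNReal) ∂volume ≤ ENNReal.ofReal M := by
  classical
  set I : Set ℝ := Set.Icc (0:ℝ) 1 with hI
  -- separable range and norming functionals
  obtain ⟨c, hc_count, hc_sub⟩ := hf.isSeparable_range
  have hc_ne : c.Nonempty := by
    rcases Set.eq_empty_or_nonempty c with h | h
    · exfalso
      have : f 0 ∈ closure c := hc_sub (Set.mem_range_self 0)
      simp [h] at this
    · exact h
  obtain ⟨y, hy⟩ := hc_count.exists_eq_range hc_ne
  choose φ hφ1 hφ2 using fun m => exists_dual_vector'' ℝ (y m)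
  have hVmeas : ∀ m, Measurable (fun s => φ m (f s)) := fun m =>
    ((φ m).continuous.comp_stronglyMeasurable hf).measurable
  have hVint : ∀ m, IntegrableOn (fun s => φ m (f s)) I volume := fun m => (hPettis (φ m)).1
  have hVle : ∀ m s, φ m (f s) ≤ ‖f s‖ := by
    intro m s
    calc φ m (f s) ≤ ‖φ m (f s)‖ := le_abs_self _
    _ ≤ ‖φ m‖ * ‖f s‖ := (φ m).le_opNorm _
    _ ≤ 1 * ‖f s‖ := by
        apply mul_le_mul_of_nonneg_right (hφ1 m) (norm_nonneg _)
    _ = ‖f s‖ := one_mul _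
  -- the running maxima
  set H : ℕ → ℝ → ℝ := fun n =>
    Nat.rec (motive := fun _ => ℝ → ℝ) (fun _ => 0) (fun m Hm s => max (Hm s) (φ m (f s))) n with hHdef
  have Hsucc : ∀ n s, H (n+1) s = max (H n s) (φ n (f s)) := fun n s => rfl
  have Hzero : ∀ s, H 0 s = 0 := fun s => rfl
  have Hnn : ∀ n s, 0 ≤ H n s := by
    intro n
    induction n with
    | zero => intro s; simp [Hzero]
    | succ n ih => intro s; rw [Hsucc]; exact le_max_of_le_left (ih s)
  have Hmeas : ∀ n, Measurable (H n) := by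
    intro n
    induction n with
    | zero => simpa [hHdef] using measurable_const
    | succ n ih => exact ih.max (hVmeas n)
  have Hmono : ∀ s, Monotone fun n => H n s := by
    intro s
    apply monotone_nat_of_le_succ
    intro n; rw [Hsucc]; exact le_max_left _ _
  have Hle : ∀ n s, H n s ≤ ‖f s‖ := by
    intro n
    induction n with
    | zero => intro s; rw [Hzero]; exact norm_nonneg _
    | succ n ih => intro s; rw [Hsucc]; exact max_le (ih s) (hVle n s)
  have Hcover : ∀ n s, 0 < H n s → ∃ m, m < n ∧ H n s = φ m (f s) := by
    intro n
    induction n with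
    | zero => intro s h; rw [Hzero] at h; exact absurd h (lt_irrefl 0)
    | succ n ih =>
      intro s h
      rw [Hsucc] at h ⊢
      rcases le_total (H n s) (φ n (f s)) with hc | hc
      · exact ⟨n, Nat.lt_succ_self n, max_eq_right hc⟩
      · rw [max_eq_left hc] at h ⊢
        obtain ⟨m, hm, hme⟩ := ih s h
        exact ⟨m, hm.trans (Nat.lt_succ_self n), hme⟩
  have HInt : ∀ n, IntegrableOn (H n) I volume := by
    intro n
    induction n with
    | zero =>
      simp only [hHdef]
      exact integrableOn_const (by simp [hI])
    | succ n ih =>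
      exact (ih.sup (hVint n)).congr (Filter.Eventually.of_forall fun s => rfl)
  -- the integral bound for each H n
  have key : ∀ n, (∫ s in I, H n s ∂volume) ≤ M := by
    intro n
    set A : ℕ → Set ℝ := fun m =>
      {s | 0 < H n s ∧ H n s = φ m (f s) ∧ ∀ m' < m, H n s ≠ φ m' (f s)} with hA
    set B : Set ℝ := {s | H n s ≤ 0} with hB
    set C : ℕ → Set ℝ := fun m => (if m < n then A m else B) ∩ I with hC
    have hAmeas : ∀ m, MeasurableSet (A m) := by
      intro m
      have hrep : A m = {s | 0 < H n s} ∩ ({s | H n s = φ m (f s)} ∩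
          ⋂ m', ⋂ _ : m' < m, {s | H n s ≠ φ m' (f s)}) := by
        ext s
        simp only [hA, Set.mem_setOf_eq, Set.mem_inter_iff, Set.mem_iInter]
        try tauto
      rw [hrep]
      refine (measurableSet_lt measurable_const (Hmeas n)).inter
        ((measurableSet_eq_fun (Hmeas n) (hVmeas m)).inter ?_)
      exact MeasurableSet.iInter fun m' => MeasurableSet.iInter fun _ =>
        (measurableSet_eq_fun (Hmeas n) (hVmeas m')).compl
    have hBmeas : MeasurableSet B := measurableSet_le (Hmeas n) measurable_const
    have hCmeas : ∀ m, MeasurableSet (C m) :=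
      fun m => (by split <;> [exact hAmeas _; exact hBmeas] : MeasurableSet
        (if m < n then A m else B)).inter measurableSet_Icc
    have hAdisj : ∀ a b : ℕ, a ≠ b → Disjoint (A a) (A b) := by
      intro a b hab
      rcases Nat.lt_or_ge a b with h | h
      · rw [Set.disjoint_left]
        rintro s ⟨_, hsa, _⟩ ⟨_, _, hsb⟩
        exact hsb a h hsa
      · rw [Set.disjoint_left]
        rintro s ⟨_, hsa, hsa'⟩ ⟨_, hsb, _⟩
        exact hsa' b (lt_of_le_of_ne h (Ne.symm hab)) hsb
    have hABdisj : ∀ a : ℕ, Disjoint (A a) B := by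
      intro a
      rw [Set.disjoint_left]
      rintro s ⟨hpos, _, _⟩ hsB
      exact absurd hpos (not_lt.2 hsB)
    have hCdisj : ∀ a b : ℕ, a < n+1 → b < n+1 → a ≠ b → Disjoint (C a) (C b) := by
      intro a b han hbn hab
      apply Set.disjoint_of_subset Set.inter_subset_left Set.inter_subset_left
      by_cases ha : a < n <;> by_cases hb : b < n <;>
        simp only [ha, hb, if_pos, if_neg, if_true, if_false]
      · exact hAdisj a b hab
      · exact hABdisj a
      · exact (hABdisj b).symm
      · exact absurd (by omega : a = b) hab
    have hCunion : ⋃ m ∈ Finset.range (n+1), C m = I := by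
      apply Set.Subset.antisymm
      · refine Set.iUnion₂_subset fun m _ => Set.inter_subset_right
      · intro s hs
        by_cases hpos : 0 < H n s
        · obtain ⟨m0, hm0, hme⟩ := Hcover n s hpos
          have hex : ∃ m, H n s = φ m (f s) := ⟨m0, hme⟩
          have hfind : Nat.find hex < n := lt_of_le_of_lt (Nat.find_min' hex hme) hm0
          refine Set.mem_biUnion (Finset.mem_range.2 (hfind.trans (Nat.lt_succ_self n))) ?_
          refine ⟨?_, hs⟩
          rw [if_pos hfind]
          exact ⟨hpos, Nat.find_spec hex, fun m' hm' => Nat.find_min hex hm'⟩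
        · refine Set.mem_biUnion (Finset.mem_range.2 (Nat.lt_succ_self n)) ?_
          exact ⟨by rw [if_neg (lt_irrefl n)]; exact not_lt.1 hpos, hs⟩
    have hsplit : (∫ s in I, H n s ∂volume)
        = ∑ m ∈ Finset.range (n+1), ∫ s in C m, H n s ∂volume := by
      rw [← hCunion, integral_biUnion_finset]
      · intro m _; exact hCmeas m
      · intro a ha b hb hab
        exact hCdisj a b (Finset.mem_range.1 (by exact_mod_cast ha))
          (Finset.mem_range.1 (by exact_mod_cast hb)) hab
      · intro m _
        exact (HInt n).mono_set Set.inter_subset_right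
    rw [hsplit, Finset.sum_range_succ]
    have hlast : (∫ s in C n, H n s ∂volume) = 0 := by
      have heq0 : Set.EqOn (H n) (fun _ => (0:ℝ)) (C n) := by
        intro s hs
        have hsB : s ∈ B := by
          have := hs.1; rwa [if_neg (lt_irrefl n)] at this
        exact le_antisymm hsB (Hnn n s)
      rw [setIntegral_congr_fun (hCmeas n) heq0]
      simp
    rw [hlast, add_zero]
    have hterm : ∀ m ∈ Finset.range n,
        (∫ s in C m, H n s ∂volume) = φ m (ν (C m)) := by
      intro m hm
      have hmn : m < n := Finset.mem_range.1 hm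
      have hCm : C m = A m ∩ I := by simp only [hC, if_pos hmn]
      have heq : Set.EqOn (H n) (fun s => φ m (f s)) (C m) := by
        intro s hs
        rw [hCm] at hs
        exact hs.1.2.1
      rw [setIntegral_congr_fun (hCmeas m) heq]
      have hP := (hPettis (φ m)).2 (C m) (hCmeas m)
      have hCmI : C m ∩ I = C m := by rw [hCm, Set.inter_assoc, Set.inter_self]
      rw [hP, hCmI]
    calc ∑ m ∈ Finset.range n, ∫ s in C m, H n s ∂volume
        = ∑ m ∈ Finset.range n, φ m (ν (C m)) := Finset.sum_congr rfl hterm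
      _ ≤ ∑ m ∈ Finset.range n, ‖ν (C m)‖ := by
          refine Finset.sum_le_sum fun m _ => ?_
          calc φ m (ν (C m)) ≤ ‖φ m (ν (C m))‖ := le_abs_self _
            _ ≤ ‖φ m‖ * ‖ν (C m)‖ := (φ m).le_opNorm _
            _ ≤ 1 * ‖ν (C m)‖ := mul_le_mul_of_nonneg_right (hφ1 m) (norm_nonneg _)
            _ = ‖ν (C m)‖ := one_mul _
      _ ≤ M := by
          rw [← Fin.sum_univ_eq_sum_range (fun m => ‖ν (C m)‖) n]
          exact hM n (fun i : Fin n => C i.val) (fun i => hCmeas i.val)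
            (fun i j hij => hCdisj i.val j.val (Nat.lt_succ_of_lt i.isLt)
              (Nat.lt_succ_of_lt j.isLt) (fun h => hij (Fin.val_injective h)))
  -- pass to the lintegral
  have hpt : ∀ s : ℝ, (‖f s‖₊ : ENNReal) = ⨆ n, ENNReal.ofReal (H n s) := by
    intro s
    apply le_antisymm
    · rw [← enorm_eq_nnnorm, ← ofReal_norm]
      refine ENNReal.le_of_forall_pos_le_add fun ε hε hfin => ?_
      have hfs : f s ∈ closure (Set.range y) := by
        rw [← hy]; exact hc_sub (Set.mem_range_self s)
      rw [Metric.mem_closure_iff] at hfs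
      have hε' : (0:ℝ) < (ε:ℝ)/2 := by
        have : (0:ℝ) < (ε:ℝ) := hε
        linarith
      obtain ⟨b, ⟨m, rfl⟩, hbm⟩ := hfs ((ε:ℝ)/2) hε'
      have h1 : ‖f s‖ ≤ φ m (f s) + (ε:ℝ) := by
        have h2 : φ m (y m) - φ m (f s) ≤ ‖y m - f s‖ := by
          calc φ m (y m) - φ m (f s) = φ m (y m - f s) := by rw [map_sub]
            _ ≤ ‖φ m (y m - f s)‖ := le_abs_self _
            _ ≤ ‖φ m‖ * ‖y m - f s‖ := (φ m).le_opNorm _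
            _ ≤ 1 * ‖y m - f s‖ := mul_le_mul_of_nonneg_right (hφ1 m) (norm_nonneg _)
            _ = ‖y m - f s‖ := one_mul _
        have h3 : ‖y m - f s‖ < (ε:ℝ)/2 := by
          rw [← dist_eq_norm, dist_comm]
          exact hbm
        have h4 : ‖f s‖ ≤ ‖y m‖ + ‖f s - y m‖ := by
          have hrw : f s = y m + (f s - y m) := by abel
          nth_rewrite 1 [hrw]
          exact norm_add_le _ _
        have h5 : φ m (y m) = ‖y m‖ := hφ2 m
        have h6 : ‖f s - y m‖ = ‖y m - f s‖ := norm_sub_rev _ _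
        linarith
      calc ENNReal.ofReal ‖f s‖ ≤ ENNReal.ofReal (φ m (f s) + (ε:ℝ)) :=
            ENNReal.ofReal_le_ofReal h1
        _ ≤ ENNReal.ofReal (φ m (f s)) + ENNReal.ofReal (ε:ℝ) := ENNReal.ofReal_add_le
        _ ≤ (⨆ n, ENNReal.ofReal (H n s)) + (ε : ENNReal) := by
            refine add_le_add ?_ ENNReal.ofReal_coe_nnreal.le
            refine le_trans (ENNReal.ofReal_le_ofReal ?_) (le_iSup_of_le (m+1) le_rfl)
            rw [Hsucc]
            exact le_max_right _ _
    · refine iSup_le fun n => ?_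
      rw [← enorm_eq_nnnorm, ← ofReal_norm]
      exact ENNReal.ofReal_le_ofReal (Hle n s)
  calc ∫⁻ s in I, (‖f s‖₊ : ENNReal) ∂volume
      = ∫⁻ s in I, ⨆ n, ENNReal.ofReal (H n s) ∂volume := lintegral_congr hpt
    _ = ⨆ n, ∫⁻ s in I, ENNReal.ofReal (H n s) ∂volume := by
        apply lintegral_iSup
        · intro n; exact (Hmeas n).ennreal_ofReal
        · intro a b hab s; exact ENNReal.ofReal_le_ofReal (Hmono s hab)
    _ ≤ ENNReal.ofReal M := by
        refine iSup_le fun n => ?_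
        rw [← ofReal_integral_eq_lintegral_ofReal (HInt n)
          (Filter.Eventually.of_forall (Hnn n))]
        exact ENNReal.ofReal_le_ofReal (key n)

lemma simple_gauge (g : SimpleFunc ℝ Y) {η : ℝ} (hη : 0 < η) :
    ∃ δ : ℝ → ℝ, (∀ s, 0 < δ s) ∧
      ∀ (n : ℕ) (x : Fin (n+1) → ℝ) (t : Fin n → ℝ),
        IsIntervalPartition n 0 1 x → IsMcShaneTagged n t → IsMcShaneFine δ n x t →
        ∑ i : Fin n, ‖(∫ s in Set.Icc (x i.castSucc) (x i.succ), g s ∂volume)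
          - (x i.succ - x i.castSucc) • g (t i)‖ < η := by
  classical
  set K : ℝ := ∑ c ∈ g.range, ‖c‖ with hK
  have hK0 : 0 ≤ K := Finset.sum_nonneg fun c _ => norm_nonneg c
  have hKc : ∀ c ∈ g.range, ‖c‖ ≤ K := fun c hc =>
    Finset.single_le_sum (fun c _ => norm_nonneg c) hc
  have hgb : ∀ s, ‖g s‖ ≤ K := fun s => hKc _ (g.mem_range_self s)
  set N : ℕ := g.range.card with hN
  set η0 : ℝ := η / ((2*K+1)*(N+1)) with hη0def
  have hD : (0:ℝ) < (2*K+1)*(N+1) := by positivity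
  have hη0 : 0 < η0 := div_pos hη hD
  set S : Y → Set ℝ := fun c => g ⁻¹' {c} ∩ Set.Icc 0 1 with hS
  have hSmeas : ∀ c, MeasurableSet (S c) := fun c =>
    (g.measurableSet_fiber c).inter measurableSet_Icc
  have hSfin : ∀ c, volume (S c) ≠ ⊤ := by
    intro c
    refine ne_top_of_le_ne_top ?_ (measure_mono Set.inter_subset_right)
    rw [Real.volume_Icc]
    exact ENNReal.ofReal_ne_top
  have hU0 : ∀ c : Y, ∃ U, U ⊇ S c ∧ IsOpen U ∧ volume U < ⊤ ∧
      volume (U \ S c) < ENNReal.ofReal η0 :=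
    fun c => (hSmeas c).exists_isOpen_diff_lt (hSfin c) (ENNReal.ofReal_pos.2 hη0).ne'
  choose U hU1 hU2 hU3 hU4 using hU0
  set W : Y → Set ℝ := fun c => U c \ S c with hW
  have hWfin : ∀ c, volume (W c) ≠ ⊤ := fun c => (hU4 c).trans_le le_top |>.ne
  -- gauge
  have hδ0 : ∀ s : ℝ, ∃ r : ℝ, 0 < r ∧
      (s ∈ Set.Icc (0:ℝ) 1 → Set.Ioo (s - r) (s + r) ⊆ U (g s)) := by
    intro s
    by_cases hs : s ∈ Set.Icc (0:ℝ) 1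
    · have hsU : s ∈ U (g s) := hU1 _ ⟨rfl, hs⟩
      obtain ⟨r, hr, hball⟩ := Metric.isOpen_iff.1 (hU2 (g s)) s hsU
      refine ⟨r, hr, fun _ => ?_⟩
      rw [← Real.ball_eq_Ioo]
      exact hball
    · exact ⟨1, one_pos, fun h => absurd h hs⟩
  choose δ hδpos hδspec using hδ0
  refine ⟨δ, hδpos, ?_⟩
  intro n x t hx ht hfine
  have hmono := hx.1
  have hab : ∀ i : Fin n, x i.castSucc ≤ x i.succ := fun i => hmono i.castSucc_le_succ
  have hIsub : ∀ i : Fin n, Set.Icc (x i.castSucc) (x i.succ) ⊆ Set.Icc (0:ℝ) 1 := by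
    intro i
    apply Set.Icc_subset_Icc
    · rw [← hx.2.1]; exact hmono (Fin.zero_le _)
    · rw [← hx.2.2]; exact hmono (Fin.le_last _)
  have hIfin : ∀ i : Fin n, volume (Set.Icc (x i.castSucc) (x i.succ)) ≠ ⊤ := by
    intro i; rw [Real.volume_Icc]; exact ENNReal.ofReal_ne_top
  have hgint : ∀ i : Fin n, IntegrableOn (fun s => g s) (Set.Icc (x i.castSucc) (x i.succ)) volume := by
    intro i
    refine Integrable.mono' (g := fun _ => K) ?_ g.stronglyMeasurable.aestronglyMeasurable
      (Filter.Eventually.of_forall hgb)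
    exact integrableOn_const (hIfin i)
  -- pointwise bound
  have key1 : ∀ i : Fin n,
      ‖(∫ s in Set.Icc (x i.castSucc) (x i.succ), g s ∂volume)
        - (x i.succ - x i.castSucc) • g (t i)‖
      ≤ 2*K * ((volume.restrict (W (g (t i)))) (Set.Icc (x i.castSucc) (x i.succ))).toReal := by
    intro i
    set a := x i.castSucc
    set b := x i.succ
    set c := g (t i) with hc
    have hIU : Set.Icc a b ⊆ U c := by
      refine Set.Subset.trans (hfine i) ?_
      have := hδspec (t i) (ht i)
      exact this
    have hconst : (b - a) • c = ∫ s in Set.Icc a b, c ∂volume := by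
      rw [setIntegral_const, Real.volume_real_Icc_of_le (hab i)]
    have hdiff : (∫ s in Set.Icc a b, g s ∂volume) - (b - a) • c
        = ∫ s in Set.Icc a b, (g s - c) ∂volume := by
      rw [hconst, ← integral_sub (hgint i) (integrableOn_const (hIfin i))]
    rw [hdiff]
    have hsplit : ∫ s in Set.Icc a b, (g s - c) ∂volume
        = ∫ s in Set.Icc a b \ g ⁻¹' {c}, (g s - c) ∂volume := by
      have h0 : ∫ s in Set.Icc a b ∩ g ⁻¹' {c}, (g s - c) ∂volume = 0 := by
        have heq : Set.EqOn (fun s => g s - c) (fun _ => (0:Y)) (Set.Icc a b ∩ g ⁻¹' {c}) := by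
          intro s hs
          have hgs : g s = c := hs.2
          simp [hgs]
        rw [setIntegral_congr_fun ((measurableSet_Icc).inter (g.measurableSet_fiber c)) heq]
        simp
      have := integral_inter_add_diff (t := g ⁻¹' {c}) (s := Set.Icc a b)
        (g.measurableSet_fiber c) ((hgint i).sub (integrableOn_const (hIfin i)))
        (f := fun s => g s - c) (μ := volume)
      rw [← this, h0, zero_add]
    rw [hsplit]
    have hbound : ‖∫ s in Set.Icc a b \ g ⁻¹' {c}, (g s - c) ∂volume‖
        ≤ 2*K * (volume (Set.Icc a b \ g ⁻¹' {c})).toReal := by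
      refine norm_setIntegral_le_of_norm_le_const ?_ ?_
      · exact lt_of_le_of_lt (measure_mono Set.diff_subset) ((hIfin i).lt_top)
      · intro z _
        calc ‖g z - c‖ ≤ ‖g z‖ + ‖c‖ := norm_sub_le _ _
          _ ≤ K + K := add_le_add (hgb z) (hKc _ (g.mem_range_self (t i)))
          _ = 2*K := by ring
    refine hbound.trans ?_
    have hsub2 : Set.Icc a b \ g ⁻¹' {c} ⊆ W c ∩ Set.Icc a b := by
      intro z hz
      refine ⟨⟨hIU hz.1, fun hzS => hz.2 hzS.1⟩, hz.1⟩
    have hmle : volume (Set.Icc a b \ g ⁻¹' {c}) ≤ (volume.restrict (W c)) (Set.Icc a b) := by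
      rw [Measure.restrict_apply measurableSet_Icc]
      exact measure_mono (fun z hz => ⟨(hsub2 hz).2, (hsub2 hz).1⟩)
    have hfin2 : (volume.restrict (W c)) (Set.Icc a b) ≠ ⊤ := by
      rw [Measure.restrict_apply measurableSet_Icc]
      exact ne_top_of_le_ne_top (hWfin c) (measure_mono Set.inter_subset_right)
    exact mul_le_mul_of_nonneg_left (ENNReal.toReal_mono hfin2 hmle) (by linarith)
  -- sum the bounds
  calc ∑ i : Fin n, ‖(∫ s in Set.Icc (x i.castSucc) (x i.succ), g s ∂volume)
          - (x i.succ - x i.castSucc) • g (t i)‖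
      ≤ ∑ i : Fin n, 2*K * ((volume.restrict (W (g (t i)))) (Set.Icc (x i.castSucc) (x i.succ))).toReal :=
        Finset.sum_le_sum fun i _ => key1 i
    _ = 2*K * ∑ i : Fin n, ((volume.restrict (W (g (t i)))) (Set.Icc (x i.castSucc) (x i.succ))).toReal := by
        exact (Finset.mul_sum _ _ _).symm
    _ = 2*K * ∑ c ∈ g.range, ∑ i ∈ Finset.univ.filter (fun i => g (t i) = c),
          ((volume.restrict (W (g (t i)))) (Set.Icc (x i.castSucc) (x i.succ))).toReal := by
        rw [Finset.sum_fiberwise_of_maps_to (fun i _ => g.mem_range_self (t i))]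
    _ ≤ 2*K * ∑ c ∈ g.range, η0 := by
        refine mul_le_mul_of_nonneg_left ?_ (by linarith)
        refine Finset.sum_le_sum fun c _ => ?_
        have hrw : ∀ i ∈ Finset.univ.filter (fun i => g (t i) = c),
            ((volume.restrict (W (g (t i)))) (Set.Icc (x i.castSucc) (x i.succ))).toReal
              = ((volume.restrict (W c)) (Set.Icc (x i.castSucc) (x i.succ))).toReal := by
          intro i hi
          rw [(Finset.mem_filter.1 hi).2]
        rw [Finset.sum_congr rfl hrw]
        set μc := volume.restrict (W c) with hμc
        have hμcpt : ∀ a : ℝ, μc {a} = 0 := by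
          intro a
          rw [hμc, Measure.restrict_apply (measurableSet_singleton a)]
          exact le_antisymm (le_trans (measure_mono Set.inter_subset_left)
            (le_of_eq (measure_singleton a))) zero_le
        have hfin3 : ∀ i : Fin n, μc (Set.Icc (x i.castSucc) (x i.succ)) ≠ ⊤ := by
          intro i
          rw [hμc, Measure.restrict_apply measurableSet_Icc]
          exact ne_top_of_le_ne_top (hWfin c) (measure_mono Set.inter_subset_right)
        calc ∑ i ∈ Finset.univ.filter (fun i => g (t i) = c),
              (μc (Set.Icc (x i.castSucc) (x i.succ))).toReal
            = (∑ i ∈ Finset.univ.filter (fun i => g (t i) = c),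
                μc (Set.Icc (x i.castSucc) (x i.succ))).toReal := by
              rw [ENNReal.toReal_sum (fun i _ => hfin3 i)]
          _ ≤ (∑ i : Fin n, μc (Set.Icc (x i.castSucc) (x i.succ))).toReal := by
              apply ENNReal.toReal_mono
              · rw [sum_measure_Icc μc hμcpt hmono]
                refine ne_top_of_le_ne_top (hWfin c) ?_
                rw [hμc, Measure.restrict_apply measurableSet_Ioc]
                exact measure_mono Set.inter_subset_right
              · exact Finset.sum_le_sum_of_subset (Finset.filter_subset _ _)
          _ = (μc (Set.Ioc (x 0) (x (Fin.last n)))).toReal := by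
              rw [sum_measure_Icc μc hμcpt hmono]
          _ ≤ (volume (W c)).toReal := by
              apply ENNReal.toReal_mono (hWfin c)
              rw [hμc, Measure.restrict_apply measurableSet_Ioc]
              exact measure_mono Set.inter_subset_right
          _ ≤ η0 := (ENNReal.toReal_lt_of_lt_ofReal (hU4 c)).le
    _ = 2*K*(N*η0) := by
        rw [Finset.sum_const, ← hN, nsmul_eq_mul]
    _ < η := by
        have h1 : 2*K*N < (2*K+1)*(N+1) := by
          have : (0:ℝ) ≤ N := Nat.cast_nonneg N
          nlinarith
        have h2 : 2*K*(N*η0) < ((2*K+1)*(N+1))*η0 := by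
          rw [← mul_assoc]
          exact mul_lt_mul_of_pos_right h1 hη0
        have h3 : ((2*K+1)*(N+1))*η0 = η := by
          rw [hη0def, mul_div_cancel₀ _ hD.ne']
        linarith

end McShaneAux

set_option maxHeartbeats 1000000 in
/-- A strongly measurable `f : [0,1] → Y` whose indefinite Pettis integral `ν` has finite
variation, and which is McShane integrable with McShane integral `ν` on each interval, is
variationally McShane integrable. -/
theorem variationally_mcshane_of_pettis_finite_variation
    {Y : Type*} [NormedAddCommGroup Y] [NormedSpace ℝ Y] [CompleteSpace Y]
    (f : ℝ → Y) (hf : StronglyMeasurable f)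
    (ν : Set ℝ → Y)
    -- `ν` is the indefinite Pettis integral of `f` on `[0,1]`
    (hPettis : ∀ φ : StrongDual ℝ Y,
      IntegrableOn (fun s => φ (f s)) (Set.Icc (0 : ℝ) 1) volume ∧
      ∀ A : Set ℝ, MeasurableSet A →
        φ (ν A) = ∫ s in A ∩ Set.Icc (0 : ℝ) 1, φ (f s) ∂volume)
    -- `ν` has finite variation
    (M : ℝ)
    (hM : ∀ (n : ℕ) (A : Fin n → Set ℝ), (∀ i, MeasurableSet (A i)) →
      Pairwise (Function.onFun Disjoint A) → (∑ i, ‖ν (A i)‖) ≤ M)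
    -- `f` is McShane integrable with integral `ν` on every subinterval of `[0,1]`
    (hMc : ∀ a b : ℝ, 0 ≤ a → a ≤ b → b ≤ 1 →
      HasMcShaneIntegral f a b (ν (Set.Icc a b))) :
    -- variational McShane integrability
    ∀ ε > (0 : ℝ), ∃ δ : ℝ → ℝ, (∀ s, 0 < δ s) ∧
      ∀ (n : ℕ) (x : Fin (n + 1) → ℝ) (t : Fin n → ℝ),
        IsIntervalPartition n 0 1 x → IsMcShaneTagged n t → IsMcShaneFine δ n x t →
        (∑ i : Fin n,
          ‖ν (Set.Icc (x i.castSucc) (x i.succ)) -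
            (x i.succ - x i.castSucc) • f (t i)‖) < ε := by
  have hlint_f : ∫⁻ s in Set.Icc (0:ℝ) 1, (‖f s‖₊ : ENNReal) ∂volume ≤ ENNReal.ofReal M :=
    lintegral_nnnorm_le_of_pettis f hf ν hPettis M hM
  have hmem : MemLp f 1 (volume.restrict (Set.Icc (0:ℝ) 1)) := by
    refine ⟨hf.aestronglyMeasurable, ?_⟩
    rw [eLpNorm_one_eq_lintegral_enorm]
    exact lt_of_le_of_lt hlint_f ENNReal.ofReal_lt_top
  have hfInt : IntegrableOn f (Set.Icc (0:ℝ) 1) volume := memLp_one_iff_integrable.1 hmem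
  have hνeq : ∀ E : Set ℝ, MeasurableSet E → E ⊆ Set.Icc (0:ℝ) 1 →
      ν E = ∫ s in E, f s ∂volume := by
    intro E hEm hEs
    rw [NormedSpace.eq_iff_forall_dual_eq ℝ]
    intro φ
    rw [(hPettis φ).2 E hEm, Set.inter_eq_self_of_subset_left hEs]
    exact ContinuousLinearMap.integral_comp_comm φ (hfInt.mono_set hEs)
  intro ε hε
  set ε' : ℝ := ε/8 with hε'def
  have hε' : 0 < ε' := by positivity
  obtain ⟨g, hg1, hg2⟩ := hmem.exists_simpleFunc_eLpNorm_sub_lt (by simp)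
    (show ENNReal.ofReal ε' ≠ 0 from (ENNReal.ofReal_pos.2 hε').ne')
  set u : ℝ → NNReal := fun s => ‖f s - g s‖₊ with hu_def
  have hu : Measurable u := (hf.sub g.stronglyMeasurable).nnnorm.measurable
  have hlint : ∫⁻ s in Set.Icc (0:ℝ) 1, (u s : ENNReal) ∂volume < ENNReal.ofReal ε' := by
    have heq : eLpNorm (f - ⇑g) 1 (volume.restrict (Set.Icc (0:ℝ) 1))
        = ∫⁻ s in Set.Icc (0:ℝ) 1, (u s : ENNReal) ∂volume := by
      rw [eLpNorm_one_eq_lintegral_enorm]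
      exact lintegral_congr fun s => rfl
    rw [← heq]
    exact hg1
  obtain ⟨δ₂, hδ₂pos, hδ₂⟩ := simple_gauge g hε'
  obtain ⟨δ₃, hδ₃pos, hδ₃⟩ := vc_gauge u hu hε' hlint
  refine ⟨fun s => min (δ₂ s) (δ₃ s), fun s => lt_min (hδ₂pos s) (hδ₃pos s), ?_⟩
  intro n x t hx ht hfine
  have hfine₂ : IsMcShaneFine δ₂ n x t := by
    intro i
    refine (hfine i).trans (Set.Ioo_subset_Ioo ?_ ?_)
    · exact sub_le_sub_left (min_le_left _ _) _
    · exact add_le_add_right (min_le_left _ _) _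
  have hfine₃ : IsMcShaneFine δ₃ n x t := by
    intro i
    refine (hfine i).trans (Set.Ioo_subset_Ioo ?_ ?_)
    · exact sub_le_sub_left (min_le_right _ _) _
    · exact add_le_add_right (min_le_right _ _) _
  have hmono := hx.1
  have hab : ∀ i : Fin n, x i.castSucc ≤ x i.succ := fun i => hmono i.castSucc_le_succ
  have hIsub : ∀ i : Fin n, Set.Icc (x i.castSucc) (x i.succ) ⊆ Set.Icc (0:ℝ) 1 := by
    intro i
    apply Set.Icc_subset_Icc
    · rw [← hx.2.1]; exact hmono (Fin.zero_le _)
    · rw [← hx.2.2]; exact hmono (Fin.le_last _)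
  have hfi : ∀ i : Fin n, IntegrableOn f (Set.Icc (x i.castSucc) (x i.succ)) volume :=
    fun i => hfInt.mono_set (hIsub i)
  have hgInt : IntegrableOn (⇑g) (Set.Icc (0:ℝ) 1) volume := memLp_one_iff_integrable.1 hg2
  have hgi : ∀ i : Fin n, IntegrableOn (⇑g) (Set.Icc (x i.castSucc) (x i.succ)) volume :=
    fun i => hgInt.mono_set (hIsub i)
  have hdec : ∀ i : Fin n,
      ‖ν (Set.Icc (x i.castSucc) (x i.succ)) - (x i.succ - x i.castSucc) • f (t i)‖
      ≤ ‖∫ s in Set.Icc (x i.castSucc) (x i.succ), (f s - g s) ∂volume‖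
        + ‖(∫ s in Set.Icc (x i.castSucc) (x i.succ), g s ∂volume)
            - (x i.succ - x i.castSucc) • g (t i)‖
        + (x i.succ - x i.castSucc) * (u (t i) : ℝ) := by
    intro i
    rw [hνeq _ measurableSet_Icc (hIsub i)]
    have e1 : (∫ s in Set.Icc (x i.castSucc) (x i.succ), f s ∂volume)
        - (x i.succ - x i.castSucc) • f (t i)
        = (∫ s in Set.Icc (x i.castSucc) (x i.succ), (f s - g s) ∂volume)
          + ((∫ s in Set.Icc (x i.castSucc) (x i.succ), g s ∂volume)
              - (x i.succ - x i.castSucc) • g (t i))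
          + (x i.succ - x i.castSucc) • (g (t i) - f (t i)) := by
      rw [integral_sub (hfi i) (hgi i), smul_sub]
      abel
    rw [e1]
    have e2 : ‖(x i.succ - x i.castSucc) • (g (t i) - f (t i))‖
        = (x i.succ - x i.castSucc) * (u (t i) : ℝ) := by
      rw [norm_smul, Real.norm_eq_abs, abs_of_nonneg (by linarith [hab i]), norm_sub_rev]
      simp [hu_def]
    calc ‖(∫ s in Set.Icc (x i.castSucc) (x i.succ), (f s - g s) ∂volume)
          + ((∫ s in Set.Icc (x i.castSucc) (x i.succ), g s ∂volume)
              - (x i.succ - x i.castSucc) • g (t i))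
          + (x i.succ - x i.castSucc) • (g (t i) - f (t i))‖
        ≤ ‖∫ s in Set.Icc (x i.castSucc) (x i.succ), (f s - g s) ∂volume‖
          + ‖(∫ s in Set.Icc (x i.castSucc) (x i.succ), g s ∂volume)
              - (x i.succ - x i.castSucc) • g (t i)‖
          + ‖(x i.succ - x i.castSucc) • (g (t i) - f (t i))‖ := norm_add₃_le
      _ = _ := by rw [e2]
  have hS1 : ∑ i : Fin n,
      ‖∫ s in Set.Icc (x i.castSucc) (x i.succ), (f s - g s) ∂volume‖ < ε' := by
    set ws : ℝ → ENNReal := fun s => ((u s : ENNReal)) with hws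
    set μw := volume.withDensity ws with hμw
    have hμwpt : ∀ a : ℝ, μw {a} = 0 := by
      intro a
      rw [hμw, withDensity_apply _ (measurableSet_singleton a)]
      exact setLIntegral_measure_zero _ _ (measure_singleton a)
    have hterm : ∀ i : Fin n,
        ‖∫ s in Set.Icc (x i.castSucc) (x i.succ), (f s - g s) ∂volume‖
          ≤ (μw (Set.Icc (x i.castSucc) (x i.succ))).toReal := by
      intro i
      refine (norm_integral_le_lintegral_norm _).trans (le_of_eq ?_)
      congr 1
      rw [hμw, withDensity_apply _ measurableSet_Icc]
      refine lintegral_congr fun s => ?_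
      rw [hws]
      exact ofReal_norm _
    have htot : ∑ i : Fin n, μw (Set.Icc (x i.castSucc) (x i.succ)) < ENNReal.ofReal ε' := by
      rw [sum_measure_Icc μw hμwpt hmono]
      calc μw (Set.Ioc (x 0) (x (Fin.last n)))
          = ∫⁻ s in Set.Ioc (x 0) (x (Fin.last n)), ws s ∂volume :=
            withDensity_apply _ measurableSet_Ioc
        _ ≤ ∫⁻ s in Set.Icc (0:ℝ) 1, ws s ∂volume := by
            apply lintegral_mono_set
            rw [hx.2.1, hx.2.2]
            exact Set.Ioc_subset_Icc_self
        _ < ENNReal.ofReal ε' := hlint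
    have hne : ∀ i : Fin n, μw (Set.Icc (x i.castSucc) (x i.succ)) ≠ ⊤ := by
      intro i
      rw [hμw, withDensity_apply _ measurableSet_Icc]
      refine (lt_of_le_of_lt (lintegral_mono_set (hIsub i)) (hlint.trans ENNReal.ofReal_lt_top)).ne
    calc ∑ i : Fin n, ‖∫ s in Set.Icc (x i.castSucc) (x i.succ), (f s - g s) ∂volume‖
        ≤ ∑ i : Fin n, (μw (Set.Icc (x i.castSucc) (x i.succ))).toReal :=
          Finset.sum_le_sum fun i _ => hterm i
      _ = (∑ i : Fin n, μw (Set.Icc (x i.castSucc) (x i.succ))).toReal :=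
          (ENNReal.toReal_sum fun i _ => hne i).symm
      _ < ε' := ENNReal.toReal_lt_of_lt_ofReal htot
  have hS2 := hδ₂ n x t hx ht hfine₂
  have hS3 := hδ₃ n x t hx ht hfine₃
  calc ∑ i : Fin n, ‖ν (Set.Icc (x i.castSucc) (x i.succ)) -
        (x i.succ - x i.castSucc) • f (t i)‖
      ≤ ∑ i : Fin n,
          (‖∫ s in Set.Icc (x i.castSucc) (x i.succ), (f s - g s) ∂volume‖
          + ‖(∫ s in Set.Icc (x i.castSucc) (x i.succ), g s ∂volume)
              - (x i.succ - x i.castSucc) • g (t i)‖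
          + (x i.succ - x i.castSucc) * (u (t i) : ℝ)) :=
        Finset.sum_le_sum fun i _ => hdec i
    _ = (∑ i : Fin n, ‖∫ s in Set.Icc (x i.castSucc) (x i.succ), (f s - g s) ∂volume‖)
        + (∑ i : Fin n, ‖(∫ s in Set.Icc (x i.castSucc) (x i.succ), g s ∂volume)
            - (x i.succ - x i.castSucc) • g (t i)‖)
        + ∑ i : Fin n, (x i.succ - x i.castSucc) * (u (t i) : ℝ) := by
        rw [Finset.sum_add_distrib, Finset.sum_add_distrib]
    _ < ε' + ε' + 2 * ε' := add_lt_add_of_lt_of_le (add_lt_add hS1 hS2) hS3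
    _ < ε := by rw [hε'def]; linarith
end
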